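/- Let E ⊆ K be fields with K = E(x) a finite simple extension of degree d, and let M_* be the Milnor–Witt K-theory of K (or more generally a graded module over K^MW_*(E) generated by symbols). Then K^MW_*(K) is generated as a left K^MW_*(E)-module by elements of the form η^m·[p₁(x)]·[p₂(x)]⋯[p_n(x)], where the p_i are monic irreducible polynomials in E[t] with deg(p₁) < deg(p₂) < ⋯ < deg(p_n) ≤ d − 1. -/

import Mathlib

/-- Axiomatization of the Milnor–Witt K-theory of a field `K`: a (not necessarily
commutative) ring `A` with symbols `[u]` for `u ∈ K^×` and an element `η`, subject to
Morel's relations, and generated as a ring by the symbols and `η`. -/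
structure MWKData (K : Type) [Field K] (A : Type) [Ring A] : Type where
  /-- the symbol `[u]` (only meaningful for `u ≠ 0`) -/
  sym : K → A
  /-- the element `η` -/
  eta : A
  steinberg : ∀ u : K, u ≠ 0 → u ≠ 1 → sym u * sym (1 - u) = 0
  sym_mul : ∀ u v : K, u ≠ 0 → v ≠ 0 →
    sym (u * v) = sym u + sym v + eta * sym u * sym v
  eta_comm : ∀ u : K, u ≠ 0 → sym u * eta = eta * sym u
  eta_rel : eta * (2 + eta * sym (-1)) = 0
  generates : Subring.closure (sym '' {u : K | u ≠ 0} ∪ {eta}) = ⊤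

namespace MWKData

variable {K : Type} [Field K] {A : Type} [Ring A] (mw : MWKData K A)

lemma eta_central (y : A) : mw.eta * y = y * mw.eta := by
  have hy : y ∈ Subring.closure (mw.sym '' {u : K | u ≠ 0} ∪ {mw.eta}) := by
    rw [mw.generates]; trivial
  induction hy using Subring.closure_induction with
  | mem z hz =>
    rcases hz with ⟨u, hu, rfl⟩ | hz
    · exact (mw.eta_comm u hu).symm
    · rw [Set.mem_singleton_iff] at hz; subst hz; rfl
  | zero => simp
  | one => simp
  | add a b _ _ ha hb => rw [mul_add, add_mul, ha, hb]
  | neg a _ ha => rw [mul_neg, neg_mul, ha]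
  | mul a b _ _ ha hb => rw [← mul_assoc, ha, mul_assoc, hb, mul_assoc]

lemma pair_comm {u v : K} (hu : u ≠ 0) (hv : v ≠ 0) :
    mw.eta * (mw.sym u * mw.sym v) = mw.eta * (mw.sym v * mw.sym u) := by
  have h1 := mw.sym_mul u v hu hv
  have h2 := mw.sym_mul v u hv hu
  rw [mul_comm v u] at h2
  have h3 : mw.sym u + mw.sym v + mw.eta * mw.sym u * mw.sym v
      = mw.sym u + mw.sym v + mw.eta * mw.sym v * mw.sym u := by
    rw [← h1, h2]; abel
  have h4 := add_left_cancel h3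
  rw [mul_assoc, mul_assoc] at h4
  exact h4

def ang (z : K) : A := 1 + mw.eta * mw.sym z

lemma ang_central {z : K} (hz : z ≠ 0) (y : A) : mw.ang z * y = y * mw.ang z := by
  have hy : y ∈ Subring.closure (mw.sym '' {u : K | u ≠ 0} ∪ {mw.eta}) := by
    rw [mw.generates]; trivial
  induction hy using Subring.closure_induction with
  | mem w hw =>
    rcases hw with ⟨u, hu, rfl⟩ | hw
    · show (1 + mw.eta * mw.sym z) * mw.sym u = mw.sym u * (1 + mw.eta * mw.sym z)
      rw [add_mul, mul_add, one_mul, mul_one]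
      congr 1
      rw [← mul_assoc, mw.eta_comm u hu, mul_assoc, mul_assoc]
      exact mw.pair_comm hz hu
    · rw [Set.mem_singleton_iff] at hw; subst hw
      exact (mw.eta_central (mw.ang z)).symm
  | zero => simp
  | one => simp
  | add a b _ _ ha hb => rw [mul_add, add_mul, ha, hb]
  | neg a _ ha => rw [mul_neg, neg_mul, ha]
  | mul a b _ _ ha hb => rw [← mul_assoc, ha, mul_assoc, hb, mul_assoc]

lemma ang_mul {u v : K} (hu : u ≠ 0) (hv : v ≠ 0) :
    mw.ang (u * v) = mw.ang u * mw.ang v := by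
  unfold ang
  rw [mw.sym_mul u v hu hv]
  have h : mw.sym u * mw.eta = mw.eta * mw.sym u := mw.eta_comm u hu
  calc 1 + mw.eta * (mw.sym u + mw.sym v + mw.eta * mw.sym u * mw.sym v)
      = 1 + mw.eta * mw.sym u + mw.eta * mw.sym v
        + mw.eta * (mw.sym u * mw.eta) * mw.sym v := by rw [h]; noncomm_ring
    _ = (1 + mw.eta * mw.sym u) * (1 + mw.eta * mw.sym v) := by noncomm_ring

end MWKData
namespace MWKData

variable {K : Type} [Field K] {A : Type} [Ring A] (mw : MWKData K A)

lemma eta_shift (p q : A) : p * (mw.eta * q) = mw.eta * (p * q) := by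
  rw [← mul_assoc, ← mw.eta_central p, mul_assoc]

lemma ang_shift {z : K} (hz : z ≠ 0) (p q : A) :
    p * (mw.ang z * q) = mw.ang z * (p * q) := by
  rw [← mul_assoc, ← mw.ang_central hz p, mul_assoc]

def eps : A := -(mw.ang (-1))

lemma addc {M : Type} [AddGroup M] {a b : M} (h : a + b = 0) : b = -a :=
  ((add_eq_zero_iff_neg_eq.mp h)).symm

lemma eps_central (y : A) : mw.eps * y = y * mw.eps := by
  unfold eps; rw [neg_mul, mul_neg, mw.ang_central (neg_ne_zero.mpr (one_ne_zero : (1:K) ≠ 0))]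

lemma eps_shift (p q : A) : p * (mw.eps * q) = mw.eps * (p * q) := by
  rw [← mul_assoc, ← mw.eps_central p, mul_assoc]

lemma eta_eta_neg1 : mw.eta * (mw.eta * mw.sym (-1)) = -(2 * mw.eta) := by
  have h := mw.eta_rel
  have h1 : mw.eta * 2 + mw.eta * (mw.eta * mw.sym (-1)) = 0 := by
    rw [← h]; noncomm_ring
  have h2 := addc h1
  rw [h2, show mw.eta * 2 = 2 * mw.eta by noncomm_ring]

lemma sym_neg {u : K} (hu : u ≠ 0) :
    mw.sym (-u) = mw.sym (-1) + mw.ang (-1) * mw.sym u := by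
  have h := mw.sym_mul (-1) u (neg_ne_zero.mpr (one_ne_zero : (1:K) ≠ 0)) hu
  rw [neg_one_mul] at h
  rw [h]; unfold ang; noncomm_ring

lemma sym_neg' {u : K} (hu : u ≠ 0) :
    mw.sym (-u) = mw.sym u + mw.ang u * mw.sym (-1) := by
  have h := mw.sym_mul u (-1) hu (neg_ne_zero.mpr (one_ne_zero : (1:K) ≠ 0))
  rw [mul_neg_one] at h
  rw [h]; unfold ang; noncomm_ring

lemma mul_expand (a b c : A) :
    a * (b + c + mw.eta * b * c) = a * b + a * c + mw.eta * (a * b) * c := by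
  have h := mw.eta_central a
  calc a * (b + c + mw.eta * b * c)
      = a * b + a * c + (a * mw.eta) * b * c := by noncomm_ring
    _ = a * b + a * c + (mw.eta * a) * b * c := by rw [← h]
    _ = a * b + a * c + mw.eta * (a * b) * c := by noncomm_ring

section Witness
variable {w₀ : K} (hw0 : w₀ ≠ 0) (hw1 : w₀ ≠ 1)
include hw0 hw1

lemma sym_one : mw.sym 1 = 0 := by
  have Ea : ∀ u : K, u ≠ 0 → mw.eta * mw.sym u * mw.sym 1 = - mw.sym 1 := by
    intro u hu
    have h := mw.sym_mul u 1 hu one_ne_zero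
    rw [mul_one, add_assoc] at h
    exact addc (left_eq_add.mp h)
  have hv : (1 : K) - w₀ ≠ 0 := sub_ne_zero.mpr (Ne.symm hw1)
  have hst := mw.steinberg w₀ hw0 hw1
  have h3 := Ea _ (mul_ne_zero hw0 hv)
  rw [mw.sym_mul w₀ (1 - w₀) hw0 hv] at h3
  have hx : mw.eta * (mw.sym w₀ + mw.sym (1-w₀) + mw.eta * mw.sym w₀ * mw.sym (1-w₀)) * mw.sym 1
      = mw.eta * mw.sym w₀ * mw.sym 1 + mw.eta * mw.sym (1-w₀) * mw.sym 1
        + mw.eta * mw.eta * (mw.sym w₀ * mw.sym (1-w₀)) * mw.sym 1 := by noncomm_ring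
  rw [hx, Ea w₀ hw0, Ea (1-w₀) hv, hst] at h3
  simp only [mul_zero, zero_mul, add_zero] at h3
  have h5 : - mw.sym 1 + - mw.sym 1 = - mw.sym 1 + 0 := by rw [add_zero]; exact h3
  have := add_left_cancel h5
  simpa using this

lemma ang_one : mw.ang (1 : K) = 1 := by
  unfold ang; rw [mw.sym_one hw0 hw1, mul_zero, add_zero]

lemma ang_sym_inv {u : K} (hu : u ≠ 0) : mw.ang u * mw.sym u⁻¹ = - mw.sym u := by
  have h := mw.sym_mul u u⁻¹ hu (inv_ne_zero hu)
  rw [mul_inv_cancel₀ hu, mw.sym_one hw0 hw1] at h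
  have h1 : mw.sym u + (mw.sym u⁻¹ + mw.eta * mw.sym u * mw.sym u⁻¹) = 0 := by
    rw [← add_assoc]; exact h.symm
  have h2 := addc h1
  calc mw.ang u * mw.sym u⁻¹
      = mw.sym u⁻¹ + mw.eta * mw.sym u * mw.sym u⁻¹ := by unfold ang; noncomm_ring
    _ = - mw.sym u := h2

lemma sym_mul_neg {u : K} (hu : u ≠ 0) : mw.sym u * mw.sym (-u) = 0 := by
  by_cases h1 : u = 1
  · subst h1; rw [mw.sym_one hw0 hw1, zero_mul]
  have hinv0 : u⁻¹ ≠ 0 := inv_ne_zero hu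
  have hinv1 : u⁻¹ ≠ 1 := by simpa [inv_eq_one] using h1
  have hw' : (1 : K) - u⁻¹ ≠ 0 := sub_ne_zero.mpr (Ne.symm hinv1)
  have hv : (1 - u⁻¹)⁻¹ ≠ 0 := inv_ne_zero hw'
  -- (a) s u * s (1 - u⁻¹) = 0
  have hstep : mw.sym u * mw.sym (1 - u⁻¹) = 0 := by
    have hst := mw.steinberg u⁻¹ hinv0 hinv1
    have hiv := mw.ang_sym_inv hw0 hw1 hu
    have hsu : mw.sym u = -(mw.ang u * mw.sym u⁻¹) := by rw [hiv, neg_neg]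
    calc mw.sym u * mw.sym (1 - u⁻¹)
        = -(mw.ang u * mw.sym u⁻¹) * mw.sym (1 - u⁻¹) := by rw [← hsu]
      _ = -(mw.ang u * (mw.sym u⁻¹ * mw.sym (1 - u⁻¹))) := by noncomm_ring
      _ = 0 := by rw [hst, mul_zero, neg_zero]
  -- (e) s ((1-u⁻¹)⁻¹) = - s (1-u⁻¹) - η * s (1-u⁻¹) * s ((1-u⁻¹)⁻¹)
  have he : mw.sym (1 - u⁻¹)⁻¹
      = - mw.sym (1 - u⁻¹) - mw.eta * mw.sym (1 - u⁻¹) * mw.sym (1 - u⁻¹)⁻¹ := by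
    have h := mw.sym_mul (1 - u⁻¹) (1 - u⁻¹)⁻¹ hw' hv
    rw [mul_inv_cancel₀ hw', mw.sym_one hw0 hw1] at h
    have h1 : mw.sym (1-u⁻¹) + (mw.sym (1-u⁻¹)⁻¹ + mw.eta * mw.sym (1-u⁻¹) * mw.sym (1-u⁻¹)⁻¹) = 0 := by
      rw [← add_assoc]; exact h.symm
    have h2 := addc h1
    exact eq_sub_of_add_eq h2
  -- (f) s u * s ((1-u⁻¹)⁻¹) = 0
  have hf : mw.sym u * mw.sym (1 - u⁻¹)⁻¹ = 0 := by
    calc mw.sym u * mw.sym (1 - u⁻¹)⁻¹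
        = mw.sym u * (- mw.sym (1 - u⁻¹) - mw.eta * mw.sym (1 - u⁻¹) * mw.sym (1 - u⁻¹)⁻¹) := by
          rw [← he]
      _ = -(mw.sym u * mw.sym (1 - u⁻¹))
          - (mw.sym u * mw.eta) * mw.sym (1 - u⁻¹) * mw.sym (1 - u⁻¹)⁻¹ := by noncomm_ring
      _ = -(mw.sym u * mw.sym (1 - u⁻¹))
          - mw.eta * (mw.sym u * mw.sym (1 - u⁻¹)) * mw.sym (1 - u⁻¹)⁻¹ := by
          rw [mw.eta_comm u hu]; noncomm_ring
      _ = 0 := by rw [hstep]; simp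
  -- (b) -u = (1-u) * (1-u⁻¹)⁻¹
  have hbu : (1 : K) - u ≠ 0 := sub_ne_zero.mpr (Ne.symm h1)
  have hkey : -u = (1 - u) * (1 - u⁻¹)⁻¹ := by
    rw [eq_mul_inv_iff_mul_eq₀ hw']
    have : -u * (1 - u⁻¹) = -u + u * u⁻¹ := by ring
    rw [this, mul_inv_cancel₀ hu]
    ring
  -- main
  have hc := mw.sym_mul (1-u) (1 - u⁻¹)⁻¹ hbu hv
  rw [← hkey] at hc
  have hst2 := mw.steinberg u hu h1
  calc mw.sym u * mw.sym (-u)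
      = mw.sym u * (mw.sym (1-u) + mw.sym (1-u⁻¹)⁻¹
          + mw.eta * mw.sym (1-u) * mw.sym (1-u⁻¹)⁻¹) := by rw [← hc]
    _ = mw.sym u * mw.sym (1-u) + mw.sym u * mw.sym (1-u⁻¹)⁻¹
          + mw.eta * (mw.sym u * mw.sym (1-u)) * mw.sym (1-u⁻¹)⁻¹ := mw.mul_expand _ _ _
    _ = 0 := by rw [hst2, hf]; simp

lemma ang_neg_one_sq : mw.ang (-1 : K) * mw.ang (-1) = 1 := by
  rw [← mw.ang_mul (neg_ne_zero.mpr (one_ne_zero : (1:K) ≠ 0)) (neg_ne_zero.mpr (one_ne_zero : (1:K) ≠ 0)), show ((-1 : K) * (-1)) = 1 by ring,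
    mw.ang_one hw0 hw1]

lemma eps_sq : (mw.eps : A) * mw.eps = 1 := by
  unfold eps; rw [neg_mul_neg, mw.ang_neg_one_sq hw0 hw1]

lemma sym_sq {u : K} (hu : u ≠ 0) :
    mw.sym u * mw.sym u = mw.eps * (mw.sym (-1) * mw.sym u) := by
  have h0 := mw.sym_mul_neg hw0 hw1 (neg_ne_zero.mpr hu)
  rw [neg_neg, mw.sym_neg hu] at h0
  have h1 : mw.sym (-1) * mw.sym u + mw.ang (-1) * (mw.sym u * mw.sym u) = 0 := by
    rw [← h0]; noncomm_ring
  have h2 := addc h1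
  calc mw.sym u * mw.sym u
      = (mw.ang (-1) * mw.ang (-1)) * (mw.sym u * mw.sym u) := by
        rw [mw.ang_neg_one_sq hw0 hw1, one_mul]
    _ = mw.ang (-1) * (mw.ang (-1) * (mw.sym u * mw.sym u)) := by rw [mul_assoc]
    _ = mw.ang (-1) * -(mw.sym (-1) * mw.sym u) := by rw [h2]
    _ = mw.eps * (mw.sym (-1) * mw.sym u) := by unfold eps; noncomm_ring

lemma eta_eps : mw.eta * mw.eps = mw.eta := by
  have h2 := mw.eta_eta_neg1
  calc mw.eta * mw.eps = -(mw.eta) - mw.eta * (mw.eta * mw.sym (-1)) := by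
        unfold eps ang; noncomm_ring
    _ = -(mw.eta) - -(2 * mw.eta) := by rw [h2]
    _ = mw.eta := by noncomm_ring

lemma eps_eta : mw.eps * mw.eta = mw.eta := by
  rw [mw.eps_central mw.eta, mw.eta_eps hw0 hw1]

lemma eta_sym_sq {u : K} (hu : u ≠ 0) :
    mw.eta * (mw.sym u * mw.sym u) = mw.eta * (mw.sym (-1) * mw.sym u) := by
  rw [mw.sym_sq hw0 hw1 hu, ← mul_assoc, mw.eta_eps hw0 hw1]

lemma eta_symsq_zero {u : K} (hu : u ≠ 0) : mw.eta * mw.sym (u * u) = 0 := by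
  have h := mw.sym_mul u u hu hu
  calc mw.eta * mw.sym (u * u)
      = mw.eta * mw.sym u + mw.eta * mw.sym u + mw.eta * (mw.eta * (mw.sym u * mw.sym u)) := by
        rw [h]; noncomm_ring
    _ = mw.eta * mw.sym u + mw.eta * mw.sym u + mw.eta * (mw.eta * (mw.sym (-1) * mw.sym u)) := by
        rw [mw.eta_sym_sq hw0 hw1 hu]
    _ = 2 * (mw.eta * mw.sym u) + (mw.eta * (mw.eta * mw.sym (-1))) * mw.sym u := by noncomm_ring
    _ = 2 * (mw.eta * mw.sym u) + (-(2 * mw.eta)) * mw.sym u := by rw [mw.eta_eta_neg1]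
    _ = 0 := by noncomm_ring

lemma ang_sq {u : K} (hu : u ≠ 0) : mw.ang u * mw.ang u = 1 := by
  rw [← mw.ang_mul hu hu]
  unfold ang
  rw [mw.eta_symsq_zero hw0 hw1 hu, add_zero]

lemma neg1_h : mw.sym (-1 : K) * (2 + mw.eta * mw.sym (-1)) = 0 := by
  have h := mw.sym_mul (-1 : K) (-1) (neg_ne_zero.mpr (one_ne_zero : (1:K) ≠ 0)) (neg_ne_zero.mpr (one_ne_zero : (1:K) ≠ 0))
  rw [show ((-1 : K) * (-1)) = 1 by ring, mw.sym_one hw0 hw1] at h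
  calc mw.sym (-1 : K) * (2 + mw.eta * mw.sym (-1))
      = mw.sym (-1) + mw.sym (-1) + (mw.sym (-1) * mw.eta) * mw.sym (-1) := by noncomm_ring
    _ = mw.sym (-1) + mw.sym (-1) + mw.eta * mw.sym (-1) * mw.sym (-1) := by
        rw [mw.eta_comm (-1) (neg_ne_zero.mpr (one_ne_zero : (1:K) ≠ 0))]
    _ = 0 := h.symm

end Witness

end MWKData
namespace MWKData

variable {K : Type} [Field K] {A : Type} [Ring A] (mw : MWKData K A)

section Witness2
variable {w₀ : K} (hw0 : w₀ ≠ 0) (hw1 : w₀ ≠ 1)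
include hw0 hw1

private lemma n1 : ((-1 : K)) ≠ 0 := neg_ne_zero.mpr one_ne_zero

lemma sym_ab {a b : K} (ha : a ≠ 0) (hb : b ≠ 0) :
    mw.sym (a * b) = mw.sym a + mw.ang a * mw.sym b := by
  rw [mw.sym_mul a b ha hb]; unfold ang; noncomm_ring

-- ang(-a) * s a = s a
lemma angneg_cancel {a : K} (ha : a ≠ 0) : mw.ang (-a) * mw.sym a = mw.sym a := by
  have hna : (-a) ≠ 0 := neg_ne_zero.mpr ha
  calc mw.ang (-a) * mw.sym a
      = mw.sym a + mw.eta * (mw.sym (-a) * mw.sym a) := by unfold ang; noncomm_ring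
    _ = mw.sym a + mw.eta * (mw.sym a * mw.sym (-a)) := by rw [mw.pair_comm hna ha]
    _ = mw.sym a := by rw [mw.sym_mul_neg hw0 hw1 ha, mul_zero, add_zero]

-- the relation (##):  0 = sa*sb + ang a * (sb*sa) + sb*s(-1) - s(-1)*sb
lemma sharp {a b : K} (ha : a ≠ 0) (hb : b ≠ 0) :
    0 = mw.sym a * mw.sym b + mw.ang a * (mw.sym b * mw.sym a)
      + mw.sym b * mw.sym (-1) - mw.sym (-1) * mw.sym b := by
  have hna : (-a) ≠ 0 := neg_ne_zero.mpr ha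
  have hab : a * b ≠ 0 := mul_ne_zero ha hb
  have h0 := mw.sym_mul_neg hw0 hw1 hab
  have hexp1 : mw.sym (a * b) = mw.sym a + mw.ang a * mw.sym b := mw.sym_ab hw0 hw1 ha hb
  have hexp2 : mw.sym (-(a * b)) = mw.sym (-a) + mw.ang (-a) * mw.sym b := by
    rw [show -(a*b) = (-a) * b by ring]; exact mw.sym_ab hw0 hw1 hna hb
  rw [hexp1, hexp2] at h0
  -- expand the product
  have hT : (mw.sym a + mw.ang a * mw.sym b) * (mw.sym (-a) + mw.ang (-a) * mw.sym b)
      = mw.sym a * mw.sym (-a) + (mw.ang (-a) * mw.sym a) * mw.sym b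
        + mw.ang a * (mw.sym b * mw.sym (-a)) + (mw.ang a * mw.ang (-a)) * (mw.sym b * mw.sym b) := by
    have c1 : mw.sym a * (mw.ang (-a) * mw.sym b) = (mw.ang (-a) * mw.sym a) * mw.sym b := by
      rw [← mul_assoc, ← mw.ang_central hna (mw.sym a)]
    have c2 : (mw.ang a * mw.sym b) * (mw.ang (-a) * mw.sym b)
        = (mw.ang a * mw.ang (-a)) * (mw.sym b * mw.sym b) := by
      rw [show (mw.ang a * mw.sym b) * (mw.ang (-a) * mw.sym b)
          = mw.ang a * (mw.sym b * mw.ang (-a)) * mw.sym b by noncomm_ring,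
        ← mw.ang_central hna (mw.sym b)]
      noncomm_ring
    rw [show (mw.sym a + mw.ang a * mw.sym b) * (mw.sym (-a) + mw.ang (-a) * mw.sym b)
        = mw.sym a * mw.sym (-a) + mw.sym a * (mw.ang (-a) * mw.sym b)
          + mw.ang a * (mw.sym b * mw.sym (-a)) + (mw.ang a * mw.sym b) * (mw.ang (-a) * mw.sym b)
        by noncomm_ring, c1, c2]
  rw [hT] at h0
  -- simplify each piece
  rw [mw.sym_mul_neg hw0 hw1 ha, mw.angneg_cancel hw0 hw1 ha] at h0
  -- sb * s(-a) = sb*sa + ang a * (sb * s(-1))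
  have h3 : mw.sym b * mw.sym (-a) = mw.sym b * mw.sym a + mw.ang a * (mw.sym b * mw.sym (-1)) := by
    rw [mw.sym_neg' ha, mul_add, ← mul_assoc, ← mw.ang_central ha (mw.sym b), mul_assoc]
  -- ang a * ang (-a) = ang (-1)
  have h4 : mw.ang a * mw.ang (-a) = mw.ang (-1 : K) := by
    rw [← mw.ang_mul ha (neg_ne_zero.mpr ha), show a * -a = (-1) * (a * a) by ring,
      mw.ang_mul (n1 hw0 hw1) (mul_ne_zero ha ha), mw.ang_mul ha ha,
      mw.ang_sq hw0 hw1 ha, mul_one]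
  rw [h3, h4] at h0
  -- ang(-1) * (sb*sb) = -(s(-1)*sb)
  have h5 : mw.ang (-1 : K) * (mw.sym b * mw.sym b) = -(mw.sym (-1) * mw.sym b) := by
    rw [mw.sym_sq hw0 hw1 hb]
    unfold eps
    rw [show mw.ang (-1:K) * (-(mw.ang (-1)) * (mw.sym (-1) * mw.sym b))
        = -((mw.ang (-1:K) * mw.ang (-1)) * (mw.sym (-1) * mw.sym b)) by noncomm_ring,
      mw.ang_neg_one_sq hw0 hw1, one_mul]
  rw [h5] at h0
  -- now h0 : 0 = sa*sb + (ang a * (sb*sa + ang a * (sb*s(-1)))) + -(s(-1)*sb)  ... modulo arrangement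
  -- expand ang a * (sb*sa + ang a*(sb*s(-1))) = ang a*(sb*sa) + sb*s(-1)   (ang_sq)
  have h6 : mw.ang a * (mw.sym b * mw.sym a + mw.ang a * (mw.sym b * mw.sym (-1)))
      = mw.ang a * (mw.sym b * mw.sym a) + mw.sym b * mw.sym (-1) := by
    have e : mw.ang a * (mw.ang a * (mw.sym b * mw.sym (-1)))
        = (mw.ang a * mw.ang a) * (mw.sym b * mw.sym (-1)) := by rw [mul_assoc]
    rw [mul_add, e, mw.ang_sq hw0 hw1 ha, one_mul]
  calc (0 : A) = mw.sym a * mw.sym b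
        + mw.ang a * (mw.sym b * mw.sym a + mw.ang a * (mw.sym b * mw.sym (-1)))
        + -(mw.sym (-1) * mw.sym b) := by rw [← h0]; noncomm_ring
    _ = _ := by rw [h6]; noncomm_ring

lemma star_neg1 {b : K} (hb : b ≠ 0) :
    mw.sym b * mw.sym (-1) = -(mw.ang b * (mw.sym (-1) * mw.sym b)) := by
  have h := mw.sharp hw0 hw1 hb (n1 hw0 hw1)
  -- 0 = sb*s(-1) + ang b * (s(-1)*sb) + s(-1)*s(-1) - s(-1)*s(-1)
  have h2 : (0:A) = mw.sym b * mw.sym (-1) + mw.ang b * (mw.sym (-1) * mw.sym b) :=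
    h.trans (by noncomm_ring)
  have h3 := addc h2.symm
  rw [h3, neg_neg]

lemma eps_comm {a b : K} (ha : a ≠ 0) (hb : b ≠ 0) :
    mw.sym a * mw.sym b = mw.eps * (mw.sym b * mw.sym a) := by
  have hsharp := mw.sharp hw0 hw1 ha hb
  -- diff1 : ang a * (sb*sa) = ang(-1) * (sb*sa)
  have claim1 : mw.eta * (mw.sym a * (mw.sym b * mw.sym a))
      = mw.eta * (mw.sym (-1) * (mw.sym b * mw.sym a)) := by
    calc mw.eta * (mw.sym a * (mw.sym b * mw.sym a))
        = (mw.eta * (mw.sym a * mw.sym b)) * mw.sym a := by noncomm_ring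
      _ = (mw.eta * (mw.sym b * mw.sym a)) * mw.sym a := by rw [mw.pair_comm ha hb]
      _ = mw.eta * (mw.sym b * (mw.sym a * mw.sym a)) := by noncomm_ring
      _ = mw.eta * (mw.sym b * (mw.eps * (mw.sym (-1) * mw.sym a))) := by
          rw [mw.sym_sq hw0 hw1 ha]
      _ = (mw.eta * mw.eps) * (mw.sym b * (mw.sym (-1) * mw.sym a)) := by
          rw [mw.eps_shift]; noncomm_ring
      _ = mw.eta * ((mw.sym b * mw.sym (-1)) * mw.sym a) := by
          rw [mw.eta_eps hw0 hw1]; noncomm_ring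
      _ = (mw.eta * (mw.sym b * mw.sym (-1))) * mw.sym a := by noncomm_ring
      _ = (mw.eta * (mw.sym (-1) * mw.sym b)) * mw.sym a := by
          rw [mw.pair_comm hb (n1 hw0 hw1)]
      _ = mw.eta * (mw.sym (-1) * (mw.sym b * mw.sym a)) := by noncomm_ring
  have diff1 : mw.ang a * (mw.sym b * mw.sym a) = mw.ang (-1:K) * (mw.sym b * mw.sym a) := by
    have hd : (mw.ang a - mw.ang (-1:K)) * (mw.sym b * mw.sym a) = 0 := by
      have : (mw.ang a - mw.ang (-1:K)) * (mw.sym b * mw.sym a)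
          = mw.eta * (mw.sym a * (mw.sym b * mw.sym a))
            - mw.eta * (mw.sym (-1) * (mw.sym b * mw.sym a)) := by
        unfold ang; noncomm_ring
      rw [this, claim1, sub_self]
    have h' : mw.ang a * (mw.sym b * mw.sym a) - mw.ang (-1:K) * (mw.sym b * mw.sym a) = 0 := by
      rw [← sub_mul]; exact hd
    exact sub_eq_zero.mp h'
  -- diff2 : sb*s(-1) - s(-1)*sb = -((ang b + 1) * (s(-1)*sb)) and that is 0
  have claim2 : (mw.ang b + 1) * (mw.sym (-1) * mw.sym b) = 0 := by
    have e1 : mw.eta * (mw.sym b * (mw.sym (-1) * mw.sym b))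
        = mw.eta * (mw.sym (-1) * (mw.sym (-1) * mw.sym b)) := by
      calc mw.eta * (mw.sym b * (mw.sym (-1) * mw.sym b))
          = (mw.eta * (mw.sym b * mw.sym (-1))) * mw.sym b := by noncomm_ring
        _ = (mw.eta * (mw.sym (-1) * mw.sym b)) * mw.sym b := by
            rw [mw.pair_comm hb (n1 hw0 hw1)]
        _ = mw.eta * (mw.sym (-1) * (mw.sym b * mw.sym b)) := by noncomm_ring
        _ = mw.eta * (mw.sym (-1) * (mw.eps * (mw.sym (-1) * mw.sym b))) := by
            rw [mw.sym_sq hw0 hw1 hb]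
        _ = (mw.eta * mw.eps) * (mw.sym (-1) * (mw.sym (-1) * mw.sym b)) := by
            rw [mw.eps_shift]; noncomm_ring
        _ = mw.eta * (mw.sym (-1) * (mw.sym (-1) * mw.sym b)) := by rw [mw.eta_eps hw0 hw1]
    have e2 : (mw.ang b + 1) * (mw.sym (-1) * mw.sym b)
        = 2 * (mw.sym (-1) * mw.sym b) + mw.eta * (mw.sym b * (mw.sym (-1) * mw.sym b)) := by
      unfold ang; noncomm_ring
    rw [e2, e1]
    have e3 : 2 * (mw.sym (-1) * mw.sym b) + mw.eta * (mw.sym (-1) * (mw.sym (-1) * mw.sym b))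
        = (mw.sym (-1) * (2 + mw.eta * mw.sym (-1))) * mw.sym b := by
      have hc : mw.sym (-1 : K) * mw.eta = mw.eta * mw.sym (-1 : K) :=
        mw.eta_comm (-1) (n1 hw0 hw1)
      calc 2 * (mw.sym (-1) * mw.sym b) + mw.eta * (mw.sym (-1) * (mw.sym (-1) * mw.sym b))
          = (2 * mw.sym (-1) + mw.eta * mw.sym (-1) * mw.sym (-1)) * mw.sym b := by noncomm_ring
        _ = (2 * mw.sym (-1) + mw.sym (-1) * mw.eta * mw.sym (-1)) * mw.sym b := by rw [hc]
        _ = (mw.sym (-1) * (2 + mw.eta * mw.sym (-1))) * mw.sym b := by noncomm_ring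
    rw [e3, mw.neg1_h hw0 hw1, zero_mul]
  have diff2 : mw.sym b * mw.sym (-1) - mw.sym (-1) * mw.sym b = -((mw.ang b + 1) * (mw.sym (-1) * mw.sym b)) := by
    rw [mw.star_neg1 hw0 hw1 hb]; noncomm_ring
  -- assemble
  have final : 0 = mw.sym a * mw.sym b + mw.ang (-1:K) * (mw.sym b * mw.sym a) := by
    calc (0:A) = mw.sym a * mw.sym b + mw.ang a * (mw.sym b * mw.sym a)
        + (mw.sym b * mw.sym (-1) - mw.sym (-1) * mw.sym b) := by rw [hsharp]; noncomm_ring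
      _ = mw.sym a * mw.sym b + mw.ang (-1:K) * (mw.sym b * mw.sym a)
        + -((mw.ang b + 1) * (mw.sym (-1) * mw.sym b)) := by rw [diff1, diff2]
      _ = mw.sym a * mw.sym b + mw.ang (-1:K) * (mw.sym b * mw.sym a) := by
          rw [claim2, neg_zero, add_zero]
  have h9 := addc final.symm
  -- h9 : ang(-1) * (sb*sa) = -(sa*sb)
  have := congrArg (fun t => -t) h9
  simp only [neg_neg] at this
  rw [← this]
  unfold eps; noncomm_ring

lemma ratio {u v : K} (hu : u ≠ 0) (hv : v ≠ 0) :
    mw.sym (u * v⁻¹) = mw.ang v * (mw.sym u - mw.sym v) := by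
  have h := mw.sym_mul (u * v⁻¹) v (mul_ne_zero hu (inv_ne_zero hv)) hv
  rw [show u * v⁻¹ * v = u by field_simp] at h
  have h2 : mw.sym u = mw.ang v * mw.sym (u * v⁻¹) + mw.sym v := by
    calc mw.sym u = mw.sym (u*v⁻¹) + mw.sym v + mw.eta * (mw.sym (u*v⁻¹) * mw.sym v) := by
          rw [h]; noncomm_ring
      _ = mw.sym (u*v⁻¹) + mw.sym v + mw.eta * (mw.sym v * mw.sym (u*v⁻¹)) := by
          rw [mw.pair_comm (mul_ne_zero hu (inv_ne_zero hv)) hv]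
      _ = mw.ang v * mw.sym (u * v⁻¹) + mw.sym v := by unfold ang; noncomm_ring
  have h3 : mw.ang v * mw.sym u = mw.sym (u * v⁻¹) + mw.ang v * mw.sym v := by
    rw [h2, mul_add, ← mul_assoc, mw.ang_sq hw0 hw1 hv, one_mul]
  rw [mul_sub, h3]; noncomm_ring

lemma milnor_key {u v : K} (hu : u ≠ 0) (hv : v ≠ 0) (hne : u ≠ v) :
    mw.sym u * mw.sym v = mw.sym u * mw.sym (v - u) - mw.sym v * mw.sym (v - u)
      + mw.eps * (mw.sym (-1) * mw.sym v) := by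
  have hr : v - u ≠ 0 := sub_ne_zero.mpr (Ne.symm hne)
  have hq : u * v⁻¹ ≠ 0 := mul_ne_zero hu (inv_ne_zero hv)
  have hq1 : u * v⁻¹ ≠ 1 := by
    intro hcon
    apply hne
    field_simp at hcon
    exact hcon
  have hst := mw.steinberg (u * v⁻¹) hq hq1
  have harg : (1 : K) - u * v⁻¹ = (v - u) * v⁻¹ := by field_simp
  rw [harg] at hst
  rw [mw.ratio hw0 hw1 hu hv, mw.ratio hw0 hw1 hr hv] at hst
  -- ang v * (su - sv) * (ang v * (s(v-u) - sv)) = 0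
  have hz : (mw.sym u - mw.sym v) * (mw.sym (v-u) - mw.sym v) = 0 := by
    have e1 : mw.ang v * (mw.sym u - mw.sym v) * (mw.ang v * (mw.sym (v-u) - mw.sym v))
        = (mw.ang v * mw.ang v) * ((mw.sym u - mw.sym v) * (mw.sym (v-u) - mw.sym v)) := by
      rw [show mw.ang v * (mw.sym u - mw.sym v) * (mw.ang v * (mw.sym (v-u) - mw.sym v))
          = mw.ang v * ((mw.sym u - mw.sym v) * mw.ang v) * (mw.sym (v-u) - mw.sym v)
          by noncomm_ring, ← mw.ang_central hv (mw.sym u - mw.sym v)]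
      noncomm_ring
    rw [e1, mw.ang_sq hw0 hw1 hv, one_mul] at hst
    exact hst
  -- expand: su*s(v-u) - su*sv - sv*s(v-u) + sv*sv = 0
  have hexp : mw.sym u * mw.sym (v-u) - mw.sym u * mw.sym v - mw.sym v * mw.sym (v-u)
      + mw.sym v * mw.sym v = 0 := by rw [← hz]; noncomm_ring
  have h2 : mw.sym u * mw.sym v
      = mw.sym u * mw.sym (v-u) - mw.sym v * mw.sym (v-u) + mw.sym v * mw.sym v := by
    have := congrArg (fun t => t + mw.sym u * mw.sym v) hexp
    simp only [zero_add] at this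
    rw [← this]; noncomm_ring
  rw [h2, mw.sym_sq hw0 hw1 hv]

end Witness2

end MWKData
namespace MWKData

variable {K : Type} [Field K] {A : Type} [Ring A] (mw : MWKData K A)

lemma eta_pow_central (k : ℕ) (y : A) : mw.eta ^ k * y = y * mw.eta ^ k := by
  have h : Commute mw.eta y := mw.eta_central y
  exact (h.pow_left k).eq

lemma eta_pow_shift (k : ℕ) (p q : A) : p * (mw.eta ^ k * q) = mw.eta ^ k * (p * q) := by
  rw [← mul_assoc, ← mw.eta_pow_central k p, mul_assoc]

lemma eps_pow_central (j : ℕ) (y : A) : mw.eps ^ j * y = y * mw.eps ^ j := by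
  have h : Commute mw.eps y := mw.eps_central y
  exact (h.pow_left j).eq

lemma eps_pow_shift (j : ℕ) (p q : A) : p * (mw.eps ^ j * q) = mw.eps ^ j * (p * q) := by
  rw [← mul_assoc, ← mw.eps_pow_central j p, mul_assoc]

end MWKData

namespace BTMain

open Polynomial

/-- the generating set from the theorem -/
def Sgen (E : Type) {K : Type} [Field E] [Field K] [Algebra E K]
    {AE AK : Type} [Ring AE] [Ring AK]
    (x : K) (d : ℕ) (mwK : MWKData K AK) (res : AE →+* AK) : Set AK :=
  {z : AK | ∃ (a : AE) (m nn : ℕ) (q : Fin nn → Polynomial E),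
      (∀ i, (q i).Monic ∧ Irreducible (q i)) ∧
      (∀ i j : Fin nn, i < j → (q i).natDegree < (q j).natDegree) ∧
      (∀ i, (q i).natDegree ≤ d - 1) ∧
      z = res a * (mwK.eta ^ m *
        (List.ofFn fun i => mwK.sym (Polynomial.aeval x (q i))).prod)}

def Gg (E : Type) {K : Type} [Field E] [Field K] [Algebra E K]
    {AE AK : Type} [Ring AE] [Ring AK]
    (x : K) (d : ℕ) (mwK : MWKData K AK) (res : AE →+* AK) : AddSubgroup AK :=
  AddSubgroup.closure (Sgen E x d mwK res)

noncomputable def wP {E K : Type} [Field E] [Field K] [Algebra E K] {AK : Type} [Ring AK]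
    (x : K) (mwK : MWKData K AK) (L : List (Polynomial E)) : AK :=
  (L.map (fun p => mwK.sym (Polynomial.aeval x p))).prod

def G0 (E : Type) {K : Type} [Field E] [Field K] [Algebra E K]
    {AE AK : Type} [Ring AE] [Ring AK]
    (x : K) (d : ℕ) (mwK : MWKData K AK) (res : AE →+* AK) : AddSubgroup AK where
  carrier := {y : AK | ∀ a : AE, res a * y ∈ Gg E x d mwK res}
  zero_mem' := by intro a; rw [mul_zero]; exact zero_mem _
  add_mem' := by intro y z hy hz a; rw [mul_add]; exact add_mem (hy a) (hz a)
  neg_mem' := by intro y hy a; rw [mul_neg]; exact neg_mem (hy a)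

def Good (E : Type) [Field E] (d : ℕ) (p : Polynomial E) : Prop :=
  p.Monic ∧ Irreducible p ∧ p.natDegree ≤ d - 1

section Ctx

variable {E K : Type} [Field E] [Field K] [Algebra E K] {AE AK : Type} [Ring AE] [Ring AK]

lemma wP_nil (x : K) (mwK : MWKData K AK) : wP x mwK ([] : List (Polynomial E)) = 1 := rfl

lemma wP_cons (x : K) (mwK : MWKData K AK) (p : Polynomial E) (L : List (Polynomial E)) :
    wP x mwK (p :: L) = mwK.sym (aeval x p) * wP x mwK L := by
  simp [wP]

lemma wP_append (x : K) (mwK : MWKData K AK) (L₁ L₂ : List (Polynomial E)) :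
    wP x mwK (L₁ ++ L₂) = wP x mwK L₁ * wP x mwK L₂ := by
  simp [wP]

lemma wP_singleton (x : K) (mwK : MWKData K AK) (p : Polynomial E) :
    wP x mwK [p] = mwK.sym (aeval x p) := by
  simp [wP]

variable (x : K) (d : ℕ) (mwK : MWKData K AK) (mwE : MWKData E AE) (res : AE →+* AK)

lemma memS (a : AE) (m : ℕ) (τ : List (Polynomial E))
    (hτ : ∀ p ∈ τ, Good E d p)
    (hp : τ.Pairwise (fun p q => p.natDegree < q.natDegree)) :
    res a * (mwK.eta ^ m * wP x mwK τ) ∈ Sgen E x d mwK res := by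
  refine ⟨a, m, τ.length, fun i => τ.get i, ?_, ?_, ?_, ?_⟩
  · intro i
    have h := hτ _ (List.get_mem τ i)
    exact ⟨h.1, h.2.1⟩
  · intro i j hij
    exact List.pairwise_iff_get.mp hp i j hij
  · intro i; exact (hτ _ (List.get_mem τ i)).2.2
  · congr 1
    congr 1
    unfold wP
    conv_lhs => rw [show τ = List.ofFn τ.get from (List.ofFn_get τ).symm]
    rw [List.map_ofFn]
    rfl

lemma one_mem_Gg : (1 : AK) ∈ Gg E x d mwK res := by
  have h : (1 : AK) = res 1 * (mwK.eta ^ 0 * wP x mwK ([] : List (Polynomial E))) := by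
    simp [wP_nil]
  rw [h]
  exact AddSubgroup.subset_closure (memS x d mwK res 1 0 [] (by simp) (by simp))

section ResCompat

variable (res_eta : res mwE.eta = mwK.eta)

include res_eta in
lemma etaGg {y : AK} (hy : y ∈ Gg E x d mwK res) : mwK.eta * y ∈ Gg E x d mwK res := by
  have hy' : y ∈ AddSubgroup.closure (Sgen E x d mwK res) := hy
  clear hy
  induction hy' using AddSubgroup.closure_induction with
  | mem z hz =>
    obtain ⟨a, m, nn, q, h1, h2, h3, rfl⟩ := hz
    rw [show mwK.eta * (res a * (mwK.eta ^ m * (List.ofFn fun i => mwK.sym ((aeval x) (q i))).prod))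
        = res (mwE.eta * a) * (mwK.eta ^ m * (List.ofFn fun i => mwK.sym ((aeval x) (q i))).prod) from by
      rw [map_mul, res_eta, mul_assoc]]
    exact AddSubgroup.subset_closure ⟨mwE.eta * a, m, nn, q, h1, h2, h3, rfl⟩
  | zero => rw [mul_zero]; exact zero_mem _
  | add a b ha hb iha ihb => rw [mul_add]; exact add_mem iha ihb
  | neg a ha iha => rw [mul_neg]; exact neg_mem iha

lemma resGg (b : AE) {y : AK} (hy : y ∈ Gg E x d mwK res) : res b * y ∈ Gg E x d mwK res := by
  have hy' : y ∈ AddSubgroup.closure (Sgen E x d mwK res) := hy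
  clear hy
  induction hy' using AddSubgroup.closure_induction with
  | mem z hz =>
    obtain ⟨a, m, nn, q, h1, h2, h3, rfl⟩ := hz
    rw [← mul_assoc, ← map_mul]
    exact AddSubgroup.subset_closure ⟨b * a, m, nn, q, h1, h2, h3, rfl⟩
  | zero => rw [mul_zero]; exact zero_mem _
  | add a c ha hc iha ihc => rw [mul_add]; exact add_mem iha ihc
  | neg a ha iha => rw [mul_neg]; exact neg_mem iha

lemma g0_res (b : AE) {y : AK} (hy : y ∈ G0 E x d mwK res) : res b * y ∈ G0 E x d mwK res := by
  intro a
  rw [← mul_assoc, ← map_mul]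
  exact hy (a * b)

include res_eta in
lemma g0_eta {y : AK} (hy : y ∈ G0 E x d mwK res) : mwK.eta * y ∈ G0 E x d mwK res := by
  intro a
  rw [mwK.eta_shift (res a) y]
  exact etaGg x d mwK mwE res res_eta (hy a)

lemma g0_gen (k : ℕ) (τ : List (Polynomial E))
    (hτ : ∀ p ∈ τ, Good E d p)
    (hp : τ.Pairwise (fun p q => p.natDegree < q.natDegree)) :
    mwK.eta ^ k * wP x mwK τ ∈ G0 E x d mwK res := by
  intro a
  exact AddSubgroup.subset_closure (memS x d mwK res a k τ hτ hp)

end ResCompat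

end Ctx

end BTMain
namespace BTMain

open Polynomial

section Ctx2

variable {E K : Type} [Field E] [Field K] [Algebra E K] {AE AK : Type} [Ring AE] [Ring AK]
variable (x : K) (d : ℕ)
variable [FiniteDimensional E K]

section FieldFacts
variable (hadj : IntermediateField.adjoin E {x} = ⊤) (hdeg : Module.finrank E K = d)

include hadj hdeg in
lemma minpoly_natDegree : (minpoly E x).natDegree = d := by
  have hint : IsIntegral E x := IsIntegral.of_finite E x
  have h1 := IntermediateField.adjoin.finrank hint
  rw [hadj] at h1
  have h2 : Module.finrank E (⊤ : IntermediateField E K) = Module.finrank E K :=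
    (IntermediateField.topEquiv.toLinearEquiv).finrank_eq
  rw [h2, hdeg] at h1
  exact h1.symm

include hdeg in
lemma dpos : 0 < d := hdeg ▸ Module.finrank_pos

include hadj hdeg in
lemma aeval_ne (f : Polynomial E) (hf : f ≠ 0) (hdf : f.natDegree < d) :
    Polynomial.aeval x f ≠ 0 := by
  intro h0
  have hdvd := minpoly.dvd E x h0
  have := Polynomial.natDegree_le_of_dvd hdvd hf
  rw [minpoly_natDegree x d hadj hdeg] at this
  omega

include hadj hdeg in
lemma good_val {p : Polynomial E} (hp : Good E d p) : Polynomial.aeval x p ≠ 0 := by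
  have hd := dpos d hdeg
  exact aeval_ne x d hadj hdeg p hp.1.ne_zero (by have := hp.2.2; omega)

include hadj hdeg in
lemma canon (z : K) (hz : z ≠ 0) :
    ∃ (c : E) (f : Polynomial E), c ≠ 0 ∧ f.Monic ∧ f.natDegree ≤ d - 1 ∧
      z = algebraMap E K c * Polynomial.aeval x f := by
  have hint : IsIntegral E x := IsIntegral.of_finite E x
  have hz1 : z ∈ Algebra.adjoin E {x} := by
    have h1 : (IntermediateField.adjoin E {x}).toSubalgebra = Algebra.adjoin E {x} :=
      IntermediateField.adjoin_simple_toSubalgebra_of_isAlgebraic hint.isAlgebraic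
    rw [hadj] at h1
    rw [← h1, IntermediateField.mem_toSubalgebra]
    trivial
  rw [Algebra.adjoin_singleton_eq_range_aeval] at hz1
  obtain ⟨f₀, hf₀⟩ := hz1
  have hmo := minpoly.monic hint
  have hFval : Polynomial.aeval x (f₀ %ₘ minpoly E x) = z := by
    have hdiv := Polynomial.modByMonic_add_div f₀ (minpoly E x)
    have h2 := congrArg (Polynomial.aeval x) hdiv
    rw [map_add, map_mul, minpoly.aeval, zero_mul, add_zero] at h2
    exact h2.trans hf₀
  set F := f₀ %ₘ minpoly E x with hF
  have hF0 : F ≠ 0 := by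
    intro h; rw [h] at hFval; simp at hFval; exact hz hFval.symm
  have hdegF : F.natDegree < d := by
    have hlt := Polynomial.degree_modByMonic_lt f₀ hmo
    rw [Polynomial.natDegree_lt_iff_degree_lt hF0]
    have hd2 : (minpoly E x).degree = (d : ℕ) := by
      rw [Polynomial.degree_eq_natDegree hmo.ne_zero, minpoly_natDegree x d hadj hdeg]
    rw [← hd2]; exact hlt
  have hlc : F.leadingCoeff ≠ 0 := Polynomial.leadingCoeff_ne_zero.mpr hF0
  refine ⟨F.leadingCoeff, F * Polynomial.C F.leadingCoeff⁻¹, hlc,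
    Polynomial.monic_mul_leadingCoeff_inv hF0, ?_, ?_⟩
  · have h1 : (F * Polynomial.C F.leadingCoeff⁻¹).natDegree ≤ F.natDegree := by
      calc (F * Polynomial.C F.leadingCoeff⁻¹).natDegree
          ≤ F.natDegree + (Polynomial.C F.leadingCoeff⁻¹).natDegree := Polynomial.natDegree_mul_le
        _ = F.natDegree := by rw [Polynomial.natDegree_C, add_zero]
    omega
  · have hcc : Polynomial.C F.leadingCoeff * (F * Polynomial.C F.leadingCoeff⁻¹) = F := by
      rw [mul_comm F, ← mul_assoc, ← Polynomial.C_mul, mul_inv_cancel₀ hlc, Polynomial.C_1, one_mul]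
    calc z = Polynomial.aeval x F := hFval.symm
      _ = Polynomial.aeval x (Polynomial.C F.leadingCoeff * (F * Polynomial.C F.leadingCoeff⁻¹)) := by
          rw [hcc]
      _ = algebraMap E K F.leadingCoeff * Polynomial.aeval x (F * Polynomial.C F.leadingCoeff⁻¹) := by
          rw [map_mul, Polynomial.aeval_C]

include hadj hdeg in
lemma xne (hd2 : 2 ≤ d) : x ≠ 0 ∧ x ≠ 1 := by
  have hmd := minpoly_natDegree x d hadj hdeg
  constructor
  · rintro rfl
    rw [minpoly.zero, Polynomial.natDegree_X] at hmd
    omega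
  · rintro rfl
    rw [minpoly.one, show (X - 1 : Polynomial E) = X - Polynomial.C 1 by simp,
      Polynomial.natDegree_X_sub_C] at hmd
    omega

end FieldFacts

variable (mwK : MWKData K AK) (mwE : MWKData E AE) (res : AE →+* AK)
variable (res_sym : ∀ a : E, a ≠ 0 → res (mwE.sym a) = mwK.sym (algebraMap E K a))
variable (res_eta : res mwE.eta = mwK.eta)

include res_sym in
lemma res_neg_one : res (mwE.sym (-1)) = mwK.sym (-1) := by
  rw [res_sym (-1) (neg_ne_zero.mpr one_ne_zero), map_neg, map_one]

include res_sym res_eta in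
lemma res_eps : res mwE.eps = mwK.eps := by
  unfold MWKData.eps MWKData.ang
  rw [map_neg, map_add, map_one, map_mul, res_eta, res_neg_one mwK mwE res res_sym]

include res_sym res_eta in
lemma res_eps_pow (j : ℕ) : res (mwE.eps ^ j) = mwK.eps ^ j := by
  rw [map_pow, res_eps mwK mwE res res_sym res_eta]

include res_eta in
lemma res_eta_pow (m : ℕ) : res (mwE.eta ^ m) = mwK.eta ^ m := by
  rw [map_pow, res_eta]

variable {w₀ : K}

lemma perm_eps (hw0 : w₀ ≠ 0) (hw1 : w₀ ≠ 1) {L L' : List (Polynomial E)}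
    (hperm : L.Perm L') :
    (∀ p ∈ L, Polynomial.aeval x p ≠ 0) →
    ∃ j : ℕ, wP x mwK L = mwK.eps ^ j * wP x mwK L' := by
  induction hperm with
  | nil => exact fun _ => ⟨0, by simp [wP_nil]⟩
  | cons p h ih =>
    intro hL
    obtain ⟨j, hj⟩ := ih (fun q hq => hL q (List.mem_cons_of_mem _ hq))
    refine ⟨j, ?_⟩
    rw [wP_cons, wP_cons, hj, mwK.eps_pow_shift]
  | swap p q l =>
    intro hL
    have hp : Polynomial.aeval x p ≠ 0 := hL p (by simp)
    have hq : Polynomial.aeval x q ≠ 0 := hL q (by simp)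
    refine ⟨1, ?_⟩
    rw [wP_cons, wP_cons, wP_cons, wP_cons, pow_one, ← mul_assoc, ← mul_assoc,
      mwK.eps_comm hw0 hw1 hq hp]
    noncomm_ring
  | trans h1 h2 ih1 ih2 =>
    intro hL
    obtain ⟨j1, hj1⟩ := ih1 hL
    obtain ⟨j2, hj2⟩ := ih2 (fun q hq => hL q (h1.mem_iff.mpr hq))
    refine ⟨j1 + j2, ?_⟩
    rw [hj1, hj2, pow_add, mul_assoc]

include res_sym res_eta in
lemma cmove (hw0 : w₀ ≠ 0) (hw1 : w₀ ≠ 1) (z : K) (hz : z ≠ 0) (a : AE) :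
    ∃ b : AE, mwK.sym z * res a = res b * mwK.sym z := by
  have ha : a ∈ Subring.closure (mwE.sym '' {u : E | u ≠ 0} ∪ {mwE.eta}) := by
    rw [mwE.generates]; trivial
  induction ha using Subring.closure_induction with
  | mem c hc =>
    rcases hc with ⟨u, hu, rfl⟩ | hc
    · refine ⟨mwE.eps * mwE.sym u, ?_⟩
      have hu' : algebraMap E K u ≠ 0 :=
        (map_ne_zero_iff _ (algebraMap E K).injective).mpr hu
      rw [res_sym u hu, map_mul, res_eps mwK mwE res res_sym res_eta, res_sym u hu,
        mwK.eps_comm hw0 hw1 hz hu', mul_assoc]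
    · rw [Set.mem_singleton_iff] at hc; subst hc
      exact ⟨mwE.eta, by rw [res_eta, (mwK.eta_central (mwK.sym z)).symm]⟩
  | zero => exact ⟨0, by simp⟩
  | one => exact ⟨1, by simp⟩
  | add a b _ _ iha ihb =>
    obtain ⟨b1, h1⟩ := iha; obtain ⟨b2, h2⟩ := ihb
    exact ⟨b1 + b2, by rw [map_add, mul_add, h1, h2, map_add, add_mul]⟩
  | neg a _ iha =>
    obtain ⟨b1, h1⟩ := iha
    exact ⟨-b1, by rw [map_neg, mul_neg, h1, map_neg, neg_mul]⟩
  | mul a b _ _ iha ihb =>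
    obtain ⟨b1, h1⟩ := iha; obtain ⟨b2, h2⟩ := ihb
    refine ⟨b1 * b2, ?_⟩
    rw [map_mul, ← mul_assoc, h1, mul_assoc, h2, map_mul, ← mul_assoc]

include res_sym res_eta in
lemma rpull (hw0 : w₀ ≠ 0) (hw1 : w₀ ≠ 1) (L : List (Polynomial E))
    (hL : ∀ p ∈ L, Polynomial.aeval x p ≠ 0) (a : AE) :
    ∃ b, wP x mwK L * res a = res b * wP x mwK L := by
  induction L with
  | nil => exact ⟨a, by simp [wP_nil]⟩
  | cons p l ih =>
    obtain ⟨b1, h1⟩ := ih (fun q hq => hL q (List.mem_cons_of_mem _ hq))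
    obtain ⟨b2, h2⟩ := cmove mwK mwE res res_sym res_eta hw0 hw1 (Polynomial.aeval x p)
      (hL p (by simp)) b1
    refine ⟨b2, ?_⟩
    rw [wP_cons, mul_assoc, h1, ← mul_assoc, h2, mul_assoc]

end Ctx2

end BTMain
namespace BTMain

open Polynomial

section Ctx3

variable {E K : Type} [Field E] [Field K] [Algebra E K] {AE AK : Type} [Ring AE] [Ring AK]
variable (x : K) (d : ℕ)
variable [FiniteDimensional E K]
variable (hadj : IntermediateField.adjoin E {x} = ⊤) (hdeg : Module.finrank E K = d)
variable (mwK : MWKData K AK) (mwE : MWKData E AE) (res : AE →+* AK)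
variable (res_sym : ∀ a : E, a ≠ 0 → res (mwE.sym a) = mwK.sym (algebraMap E K a))
variable (res_eta : res mwE.eta = mwK.eta)
variable {w₀ : K}

include hadj hdeg res_sym res_eta in
lemma exp_lemma (hw0 : w₀ ≠ 0) (hw1 : w₀ ≠ 1) :
    ∀ (n : ℕ) (g : Polynomial E), g.natDegree ≤ n → g.Monic → g.natDegree < d →
      ∀ (Y : AK),
      (∀ (k : ℕ) (N : List (Polynomial E)),
          (∀ p ∈ N, p.Monic ∧ Irreducible p ∧ p ∣ g) →
          mwK.eta ^ k * (wP x mwK N * Y) ∈ G0 E x d mwK res) →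
      ∀ k : ℕ, mwK.eta ^ k * (mwK.sym (Polynomial.aeval x g) * Y) ∈ G0 E x d mwK res := by
  intro n
  induction n with
  | zero =>
    intro g hgn hgm hgd Y H k
    have hg1 : g = 1 := hgm.natDegree_eq_zero.mp (Nat.le_zero.mp hgn)
    subst hg1
    rw [map_one, mwK.sym_one hw0 hw1, zero_mul, mul_zero]
    exact zero_mem _
  | succ n ih =>
    intro g hgn hgm hgd Y H k
    by_cases hg0 : g.natDegree = 0
    · have hg1 : g = 1 := hgm.natDegree_eq_zero.mp hg0
      subst hg1
      rw [map_one, mwK.sym_one hw0 hw1, zero_mul, mul_zero]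
      exact zero_mem _
    by_cases hirr : Irreducible g
    · have h := H k [g] (by
        intro p hp; rw [List.mem_singleton] at hp; subst hp
        exact ⟨hgm, hirr, dvd_rfl⟩)
      rw [wP_singleton] at h
      exact h
    · have hnu : ¬ IsUnit g := by
        intro h; exact hg0 (Polynomial.natDegree_eq_zero_of_isUnit h)
      obtain ⟨p, hpm, hpi, hdvd⟩ := Polynomial.exists_monic_irreducible_factor g hnu
      obtain ⟨g₂, rfl⟩ := hdvd
      have hg₂m : g₂.Monic := hpm.of_mul_monic_left hgm
      have hp0 : p ≠ 0 := hpm.ne_zero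
      have hg₂0 : g₂ ≠ 0 := hg₂m.ne_zero
      have hdegm : (p * g₂).natDegree = p.natDegree + g₂.natDegree :=
        Polynomial.natDegree_mul hp0 hg₂0
      have hppos : 0 < p.natDegree := by
        rcases Nat.eq_zero_or_pos p.natDegree with h | h
        · exfalso
          have : p = 1 := hpm.natDegree_eq_zero.mp h
          rw [this] at hpi
          exact not_irreducible_one hpi
        · exact h
      have hg₂n : g₂.natDegree ≤ n := by omega
      have hg₂d : g₂.natDegree < d := by omega
      have hpd : p.natDegree < d := by omega
      have hvp : Polynomial.aeval x p ≠ 0 := aeval_ne x d hadj hdeg p hp0 hpd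
      have hvg₂ : Polynomial.aeval x g₂ ≠ 0 := aeval_ne x d hadj hdeg g₂ hg₂0 hg₂d
      have hsym : mwK.sym (Polynomial.aeval x (p * g₂))
          = mwK.sym (Polynomial.aeval x p) + mwK.sym (Polynomial.aeval x g₂)
            + mwK.eta * mwK.sym (Polynomial.aeval x p) * mwK.sym (Polynomial.aeval x g₂) := by
        rw [map_mul]; exact mwK.sym_mul _ _ hvp hvg₂
      rw [hsym]
      have hexpand : (mwK.sym (Polynomial.aeval x p) + mwK.sym (Polynomial.aeval x g₂)
            + mwK.eta * mwK.sym (Polynomial.aeval x p) * mwK.sym (Polynomial.aeval x g₂)) * Y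
          = mwK.sym (Polynomial.aeval x p) * Y + mwK.sym (Polynomial.aeval x g₂) * Y
            + mwK.eta * ((mwK.sym (Polynomial.aeval x p) * mwK.sym (Polynomial.aeval x g₂)) * Y) := by
        noncomm_ring
      rw [hexpand, mul_add, mul_add]
      refine add_mem (add_mem ?_ ?_) ?_
      · have h := H k [p] (by
          intro q hq; rw [List.mem_singleton] at hq; rw [hq]
          exact ⟨hpm, hpi, dvd_mul_right p g₂⟩)
        rw [wP_singleton] at h
        exact h
      · exact ih g₂ hg₂n hg₂m hg₂d Y (fun k' N hN => H k' N (fun q hq =>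
          ⟨(hN q hq).1, (hN q hq).2.1, ((hN q hq).2.2).mul_left p⟩)) k
      · have e1 : mwK.eta ^ k * (mwK.eta
              * ((mwK.sym (Polynomial.aeval x p) * mwK.sym (Polynomial.aeval x g₂)) * Y))
            = mwK.eta ^ (k+1) * (mwK.sym (Polynomial.aeval x g₂)
              * (mwK.sym (Polynomial.aeval x p) * Y)) := by
          calc mwK.eta ^ k * (mwK.eta
              * ((mwK.sym (Polynomial.aeval x p) * mwK.sym (Polynomial.aeval x g₂)) * Y))
              = mwK.eta ^ k * ((mwK.eta
                * (mwK.sym (Polynomial.aeval x p) * mwK.sym (Polynomial.aeval x g₂))) * Y) := by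
                noncomm_ring
            _ = mwK.eta ^ k * ((mwK.eta
                * (mwK.sym (Polynomial.aeval x g₂) * mwK.sym (Polynomial.aeval x p))) * Y) := by
                rw [mwK.pair_comm hvp hvg₂]
            _ = mwK.eta ^ (k+1) * (mwK.sym (Polynomial.aeval x g₂)
                * (mwK.sym (Polynomial.aeval x p) * Y)) := by
                rw [pow_succ]; noncomm_ring
        rw [e1]
        refine ih g₂ hg₂n hg₂m hg₂d (mwK.sym (Polynomial.aeval x p) * Y) ?_ (k+1)
        intro k' N hN
        have h := H k' (N ++ [p]) (fun q hq => by
          rcases List.mem_append.mp hq with h | h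
          · exact ⟨(hN q h).1, (hN q h).2.1, ((hN q h).2.2).mul_left p⟩
          · rw [List.mem_singleton] at h; rw [h]
            exact ⟨hpm, hpi, dvd_mul_right p g₂⟩)
        rw [wP_append, wP_singleton] at h
        rw [show wP x mwK N * (mwK.sym (Polynomial.aeval x p) * Y)
            = (wP x mwK N * mwK.sym (Polynomial.aeval x p)) * Y from (mul_assoc _ _ _).symm]
        exact h

end Ctx3

end BTMain
namespace BTMain

open Polynomial

section Ctx4

variable {E K : Type} [Field E] [Field K] [Algebra E K] {AE AK : Type} [Ring AE] [Ring AK]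
variable (x : K) (d : ℕ)
variable [FiniteDimensional E K]
variable (hadj : IntermediateField.adjoin E {x} = ⊤) (hdeg : Module.finrank E K = d)
variable (mwK : MWKData K AK) (mwE : MWKData E AE) (res : AE →+* AK)
variable (res_sym : ∀ a : E, a ≠ 0 → res (mwE.sym a) = mwK.sym (algebraMap E K a))
variable (res_eta : res mwE.eta = mwK.eta)
variable {w₀ : K}

lemma irr_deg_pos {p : Polynomial E} (hm : p.Monic) (hi : Irreducible p) : 0 < p.natDegree := by
  rcases Nat.eq_zero_or_pos p.natDegree with h | h
  · exfalso; rw [hm.natDegree_eq_zero.mp h] at hi; exact not_irreducible_one hi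
  · exact h

include res_sym res_eta in
lemma g0_eps {y : AK} (hy : y ∈ G0 E x d mwK res) : mwK.eps * y ∈ G0 E x d mwK res := by
  rw [← res_eps mwK mwE res res_sym res_eta]
  exact g0_res x d mwK res _ hy

include res_sym in
lemma g0_sneg1 {y : AK} (hy : y ∈ G0 E x d mwK res) : mwK.sym (-1) * y ∈ G0 E x d mwK res := by
  rw [← res_neg_one mwK mwE res res_sym]
  exact g0_res x d mwK res _ hy

def TailGood (E : Type) [Field E] (d n : ℕ) (τ : List (Polynomial E)) : Prop :=
  (∀ p ∈ τ, Good E d p ∧ n < p.natDegree) ∧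
    τ.Pairwise (fun p q => p.natDegree < q.natDegree)

include hadj hdeg res_sym res_eta in
lemma psi (hw0 : w₀ ≠ 0) (hw1 : w₀ ≠ 1) :
    ∀ (n : ℕ) (L τ : List (Polynomial E)) (k : ℕ),
      (∀ p ∈ L, Good E d p ∧ p.natDegree ≤ n) → TailGood E d n τ →
      mwK.eta ^ k * (wP x mwK L * wP x mwK τ) ∈ G0 E x d mwK res := by
  intro n
  induction n with
  | zero =>
    intro L τ k hL hτ
    cases L with
    | nil =>
      rw [wP_nil, one_mul]
      exact g0_gen x d mwK res k τ (fun p hp => (hτ.1 p hp).1) hτ.2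
    | cons p L' =>
      exfalso
      have h := hL p (by simp)
      have h2 : 0 < p.natDegree := irr_deg_pos h.1.1 h.1.2.1
      omega
  | succ n ih =>
    suffices Hc : ∀ (c : ℕ) (L τ : List (Polynomial E)) (k : ℕ),
        (∀ p ∈ L, Good E d p ∧ p.natDegree ≤ n + 1) →
        L.countP (fun p => p.natDegree == n + 1) ≤ c →
        TailGood E d (n+1) τ →
        mwK.eta ^ k * (wP x mwK L * wP x mwK τ) ∈ G0 E x d mwK res by
      intro L τ k hL hτ
      exact Hc (L.countP (fun p => p.natDegree == n + 1)) L τ k hL le_rfl hτ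
    intro c
    induction c with
    | zero =>
      intro L τ k hL hc hτ
      refine ih L τ k ?_ ?_
      · intro p hp
        refine ⟨(hL p hp).1, ?_⟩
        have h2 := (hL p hp).2
        have h3 : ¬ ((p.natDegree == n + 1) = true) := by
          intro hb
          have h4 : 0 < L.countP (fun p => p.natDegree == n + 1) :=
            List.countP_pos_iff.mpr ⟨p, hp, hb⟩
          omega
        simp only [beq_iff_eq] at h3
        omega
      · exact ⟨fun p hp => ⟨(hτ.1 p hp).1, by have := (hτ.1 p hp).2; omega⟩, hτ.2⟩
    | succ c ihc =>
      intro L τ k hL hc hτ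
      by_cases hsmall : L.countP (fun p => p.natDegree == n + 1) ≤ c
      · exact ihc L τ k hL hsmall hτ
      have hcount : L.countP (fun p => p.natDegree == n + 1) = c + 1 := by omega
      have hperm0 : (L.filter (fun p => p.natDegree == n + 1)
          ++ L.filter (fun p => !(p.natDegree == n + 1))).Perm L :=
        List.filter_append_perm _ L
      have hflen : (L.filter (fun p => p.natDegree == n + 1)).length = c + 1 := by
        rw [← List.countP_eq_length_filter]; exact hcount
      have hvals : ∀ p ∈ L, Polynomial.aeval x p ≠ 0 :=
        fun p hp => good_val x d hadj hdeg (hL p hp).1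
      have hmemR : ∀ p ∈ L.filter (fun p => !(p.natDegree == n + 1)),
          p ∈ L ∧ p.natDegree ≤ n := by
        intro p hp
        have h2 := List.mem_filter.mp hp
        refine ⟨h2.1, ?_⟩
        have h3 : p.natDegree ≠ n + 1 := by simpa using h2.2
        have := (hL p h2.1).2
        omega
      obtain ⟨f, F1, hFeq⟩ : ∃ f F1, L.filter (fun p => p.natDegree == n + 1) = f :: F1 := by
        cases hFd : L.filter (fun p => p.natDegree == n + 1) with
        | nil => rw [hFd] at hflen; simp at hflen
        | cons a l => exact ⟨a, l, rfl⟩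
      have hfmem : f ∈ L ∧ f.natDegree = n + 1 := by
        have h2 : f ∈ L.filter (fun p => p.natDegree == n + 1) := by rw [hFeq]; simp
        have h3 := List.mem_filter.mp h2
        exact ⟨h3.1, by simpa using h3.2⟩
      -- the key degree bound: n + 1 ≤ d - 1
      have hnd : n + 1 ≤ d - 1 := by
        have := (hL f hfmem.1).1.2.2
        omega
      have hdd : 0 < d := dpos d hdeg
      set Rr := L.filter (fun p => !(p.natDegree == n + 1)) with hRr
      cases c with
      | zero =>
        -- exactly one top letter
        have hF1 : F1 = [] := by
          have h2 : (f :: F1).length = 1 := by rw [← hFeq]; exact hflen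
          simpa using h2
        subst hF1
        have hperm1 : (f :: Rr).Perm L := by
          have := hperm0; rw [hFeq] at this; exact this
        have hperm2 : L.Perm (Rr ++ [f]) :=
          hperm1.symm.trans (List.perm_append_singleton f Rr).symm
        obtain ⟨j, hj⟩ := perm_eps x mwK hw0 hw1 hperm2 hvals
        rw [hj, wP_append, wP_singleton]
        have hmassage : mwK.eta ^ k * ((mwK.eps ^ j
              * (wP x mwK Rr * mwK.sym (Polynomial.aeval x f))) * wP x mwK τ)
            = res (mwE.eps ^ j) * (mwK.eta ^ k * (wP x mwK Rr * wP x mwK (f :: τ))) := by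
          rw [res_eps_pow mwK mwE res res_sym res_eta, wP_cons]
          rw [show (mwK.eps ^ j * (wP x mwK Rr * mwK.sym (Polynomial.aeval x f))) * wP x mwK τ
              = mwK.eps ^ j * (wP x mwK Rr * (mwK.sym (Polynomial.aeval x f) * wP x mwK τ))
              from by noncomm_ring]
          rw [mwK.eps_pow_shift]
        rw [hmassage]
        refine g0_res x d mwK res _ ?_
        refine ih Rr (f :: τ) k ?_ ?_
        · intro p hp
          obtain ⟨hpL, hpn⟩ := hmemR p hp
          exact ⟨(hL p hpL).1, hpn⟩
        · constructor
          · intro p hp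
            rcases List.mem_cons.mp hp with h | h
            · rw [h]
              exact ⟨(hL f hfmem.1).1, by rw [hfmem.2]; omega⟩
            · have h2 := hτ.1 p h
              exact ⟨h2.1, by have := h2.2; omega⟩
          · rw [List.pairwise_cons]
            refine ⟨?_, hτ.2⟩
            intro q hq
            have := (hτ.1 q hq).2
            rw [hfmem.2]
            omega
      | succ c' =>
        -- at least two top letters
        obtain ⟨g, F2, hF1eq⟩ : ∃ g F2, F1 = g :: F2 := by
          cases F1 with
          | nil =>
            exfalso
            have h2 : (f :: ([] : List (Polynomial E))).length = c' + 2 := by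
              rw [← hFeq]; exact hflen
            simp at h2
          | cons a l => exact ⟨a, l, rfl⟩
        subst hF1eq
        have hgmem : g ∈ L ∧ g.natDegree = n + 1 := by
          have h2 : g ∈ L.filter (fun p => p.natDegree == n + 1) := by rw [hFeq]; simp
          have h3 := List.mem_filter.mp h2
          exact ⟨h3.1, by simpa using h3.2⟩
        have hperm1 : ((f :: g :: F2) ++ Rr).Perm L := by
          have := hperm0; rw [hFeq] at this; exact this
        have hperm2 : L.Perm (f :: g :: (F2 ++ Rr)) := hperm1.symm
        obtain ⟨j, hj⟩ := perm_eps x mwK hw0 hw1 hperm2 hvals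
        -- counts in M
        have hMgood : ∀ p ∈ F2 ++ Rr, Good E d p ∧ p.natDegree ≤ n + 1 := by
          intro p hp
          have hpL : p ∈ L := hperm2.mem_iff.mpr (by simp [hp])
          exact hL p hpL
        have hcM : (F2 ++ Rr).countP (fun p => p.natDegree == n + 1) = c' := by
          have hpc := hperm2.countP_eq (fun p => p.natDegree == n + 1)
          rw [hcount] at hpc
          have h2 : (f :: g :: (F2 ++ Rr)).countP (fun p => p.natDegree == n + 1)
              = (F2 ++ Rr).countP (fun p => p.natDegree == n + 1) + 2 := by
            rw [List.countP_cons_of_pos (p := fun p => p.natDegree == n + 1) (a := f) (by simpa using hfmem.2),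
              List.countP_cons_of_pos (p := fun p => p.natDegree == n + 1) (a := g) (by simpa using hgmem.2)]
          omega
        have hu0 : Polynomial.aeval x f ≠ 0 := hvals f hfmem.1
        have hv0 : Polynomial.aeval x g ≠ 0 := hvals g hgmem.1
        -- goal massage
        have hstep0 : mwK.eta ^ k * (wP x mwK L * wP x mwK τ)
            = res (mwE.eps ^ j) * (mwK.eta ^ k
              * ((mwK.sym (Polynomial.aeval x f) * mwK.sym (Polynomial.aeval x g))
                * (wP x mwK (F2 ++ Rr) * wP x mwK τ))) := by
          rw [hj, wP_cons, wP_cons, res_eps_pow mwK mwE res res_sym res_eta]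
          rw [show (mwK.eps ^ j * (mwK.sym (Polynomial.aeval x f)
                * (mwK.sym (Polynomial.aeval x g) * wP x mwK (F2 ++ Rr)))) * wP x mwK τ
              = mwK.eps ^ j * ((mwK.sym (Polynomial.aeval x f) * mwK.sym (Polynomial.aeval x g))
                * (wP x mwK (F2 ++ Rr) * wP x mwK τ)) from by noncomm_ring]
          rw [mwK.eps_pow_shift]
        rw [hstep0]
        refine g0_res x d mwK res _ ?_
        -- abbreviation for the context
        by_cases hfgeq : f = g
        · -- equal top letters: [u][u] = eps * (s(-1) * [u])
          subst hfgeq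
          rw [mwK.sym_sq hw0 hw1 hu0]
          have hmass2 : mwK.eta ^ k * ((mwK.eps * (mwK.sym (-1) * mwK.sym (Polynomial.aeval x f)))
                * (wP x mwK (F2 ++ Rr) * wP x mwK τ))
              = mwK.eps * (mwK.sym (-1)
                * (mwK.eta ^ k * (wP x mwK (f :: (F2 ++ Rr)) * wP x mwK τ))) := by
            rw [wP_cons]
            rw [show (mwK.eps * (mwK.sym (-1) * mwK.sym (Polynomial.aeval x f)))
                  * (wP x mwK (F2 ++ Rr) * wP x mwK τ)
                = mwK.eps * (mwK.sym (-1) * ((mwK.sym (Polynomial.aeval x f)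
                  * wP x mwK (F2 ++ Rr)) * wP x mwK τ)) from by noncomm_ring]
            rw [mwK.eps_shift]
            congr 1
            rw [← mwK.eta_pow_shift]
          rw [hmass2]
          refine g0_eps x d mwK mwE res res_sym res_eta ?_
          refine g0_sneg1 x d mwK mwE res res_sym ?_
          refine ihc (f :: (F2 ++ Rr)) τ k ?_ ?_ hτ
          · intro p hp
            rcases List.mem_cons.mp hp with h | h
            · rw [h]; exact ⟨(hL f hfmem.1).1, by omega⟩
            · exact hMgood p h
          · rw [List.countP_cons_of_pos (p := fun p => p.natDegree == n + 1) (a := f) (by simpa using hfmem.2), hcM]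
        · -- distinct top letters: Milnor's identity
          have hh0 : g - f ≠ 0 := sub_ne_zero.mpr (Ne.symm hfgeq)
          have hhdeg : (g - f).natDegree ≤ n := by
            have hf0 : f ≠ 0 := (hL f hfmem.1).1.1.ne_zero
            have hg0 : g ≠ 0 := (hL g hgmem.1).1.1.ne_zero
            have hdf : f.degree = ((n+1 : ℕ) : WithBot ℕ) := by
              rw [Polynomial.degree_eq_natDegree hf0, hfmem.2]
            have hdg : g.degree = ((n+1 : ℕ) : WithBot ℕ) := by
              rw [Polynomial.degree_eq_natDegree hg0, hgmem.2]
            have hlt := Polynomial.degree_sub_lt (hdg.trans hdf.symm) hg0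
              (by rw [(hL f hfmem.1).1.1.leadingCoeff, (hL g hgmem.1).1.1.leadingCoeff])
            rw [hdg] at hlt
            have := (Polynomial.natDegree_lt_iff_degree_lt hh0).mpr hlt
            omega
          have hwne : Polynomial.aeval x (g - f) ≠ 0 :=
            aeval_ne x d hadj hdeg (g - f) hh0 (by omega)
          have hune : Polynomial.aeval x f ≠ Polynomial.aeval x g := by
            intro he
            apply hwne
            rw [map_sub, ← he, sub_self]
          have hvu : Polynomial.aeval x g - Polynomial.aeval x f = Polynomial.aeval x (g - f) := by
            rw [map_sub]
          have hkey := mwK.milnor_key hw0 hw1 hu0 hv0 hune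
          rw [hvu] at hkey
          rw [hkey]
          -- expand the product over X := wP (F2 ++ Rr) * wP τ
          rw [show (mwK.sym (Polynomial.aeval x f) * mwK.sym (Polynomial.aeval x (g - f))
                - mwK.sym (Polynomial.aeval x g) * mwK.sym (Polynomial.aeval x (g - f))
                + mwK.eps * (mwK.sym (-1) * mwK.sym (Polynomial.aeval x g)))
                * (wP x mwK (F2 ++ Rr) * wP x mwK τ)
              = (mwK.sym (Polynomial.aeval x f) * mwK.sym (Polynomial.aeval x (g - f)))
                  * (wP x mwK (F2 ++ Rr) * wP x mwK τ)
                - (mwK.sym (Polynomial.aeval x g) * mwK.sym (Polynomial.aeval x (g - f)))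
                  * (wP x mwK (F2 ++ Rr) * wP x mwK τ)
                + (mwK.eps * (mwK.sym (-1) * mwK.sym (Polynomial.aeval x g)))
                  * (wP x mwK (F2 ++ Rr) * wP x mwK τ) from by noncomm_ring]
          rw [mul_add, mul_sub]
          -- common handler for the first two terms
          have main_term : ∀ (e : Polynomial E), e ∈ L → e.natDegree = n + 1 →
              mwK.eta ^ k * ((mwK.sym (Polynomial.aeval x e)
                  * mwK.sym (Polynomial.aeval x (g - f)))
                * (wP x mwK (F2 ++ Rr) * wP x mwK τ)) ∈ G0 E x d mwK res := by
            intro e heL hedeg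
            have hev : Polynomial.aeval x e ≠ 0 := hvals e heL
            rw [mwK.eps_comm hw0 hw1 hev hwne]
            have e2 : mwK.eta ^ k * ((mwK.eps * (mwK.sym (Polynomial.aeval x (g - f))
                    * mwK.sym (Polynomial.aeval x e)))
                  * (wP x mwK (F2 ++ Rr) * wP x mwK τ))
                = mwK.eps * (mwK.eta ^ k * (mwK.sym (Polynomial.aeval x (g - f))
                  * (wP x mwK (e :: (F2 ++ Rr)) * wP x mwK τ))) := by
              rw [wP_cons]
              rw [show (mwK.eps * (mwK.sym (Polynomial.aeval x (g - f))
                      * mwK.sym (Polynomial.aeval x e)))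
                    * (wP x mwK (F2 ++ Rr) * wP x mwK τ)
                  = mwK.eps * (mwK.sym (Polynomial.aeval x (g - f))
                    * ((mwK.sym (Polynomial.aeval x e) * wP x mwK (F2 ++ Rr)) * wP x mwK τ))
                  from by noncomm_ring]
              rw [mwK.eps_shift]
            rw [e2]
            refine g0_eps x d mwK mwE res res_sym res_eta ?_
            -- now reduce the symbol of the (lower-degree) difference polynomial
            have hlc : (g - f).leadingCoeff ≠ 0 := Polynomial.leadingCoeff_ne_zero.mpr hh0
            have hmon : ((g - f) * Polynomial.C (g - f).leadingCoeff⁻¹).Monic :=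
              Polynomial.monic_mul_leadingCoeff_inv hh0
            have hcc : Polynomial.C (g - f).leadingCoeff
                * ((g - f) * Polynomial.C (g - f).leadingCoeff⁻¹) = (g - f) := by
              rw [mul_comm (g - f), ← mul_assoc, ← Polynomial.C_mul, mul_inv_cancel₀ hlc,
                Polynomial.C_1, one_mul]
            have hfac : Polynomial.aeval x (g - f)
                = algebraMap E K (g - f).leadingCoeff
                  * Polynomial.aeval x ((g - f) * Polynomial.C (g - f).leadingCoeff⁻¹) := by
              conv_lhs => rw [← hcc]
              rw [map_mul, Polynomial.aeval_C]
            have hdeg₁ : ((g - f) * Polynomial.C (g - f).leadingCoeff⁻¹).natDegree ≤ n := by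
              have h2 : ((g - f) * Polynomial.C (g - f).leadingCoeff⁻¹).natDegree
                  ≤ (g - f).natDegree := by
                calc ((g - f) * Polynomial.C (g - f).leadingCoeff⁻¹).natDegree
                    ≤ (g - f).natDegree + (Polynomial.C (g - f).leadingCoeff⁻¹).natDegree :=
                      Polynomial.natDegree_mul_le
                  _ = (g - f).natDegree := by rw [Polynomial.natDegree_C, add_zero]
              omega
            have hHyp : ∀ (k' : ℕ) (N : List (Polynomial E)),
                (∀ p ∈ N, p.Monic ∧ Irreducible p
                  ∧ p ∣ ((g - f) * Polynomial.C (g - f).leadingCoeff⁻¹)) →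
                mwK.eta ^ k' * (wP x mwK N
                  * (wP x mwK (e :: (F2 ++ Rr)) * wP x mwK τ)) ∈ G0 E x d mwK res := by
              intro k' N hN
              have hNdeg : ∀ p ∈ N, p.natDegree ≤ n := by
                intro p hp
                have h3 := Polynomial.natDegree_le_of_dvd (hN p hp).2.2 hmon.ne_zero
                omega
              have hmem := ihc (N ++ e :: (F2 ++ Rr)) τ k' ?_ ?_ hτ
              · rw [wP_append, mul_assoc] at hmem
                exact hmem
              · intro p hp
                rcases List.mem_append.mp hp with h | h
                · refine ⟨⟨(hN p h).1, (hN p h).2.1, by have := hNdeg p h; omega⟩, ?_⟩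
                  have := hNdeg p h; omega
                · rcases List.mem_cons.mp h with h' | h'
                  · rw [h']; exact ⟨(hL e heL).1, by omega⟩
                  · exact hMgood p h'
              · rw [List.countP_append]
                have hN0 : N.countP (fun p => p.natDegree == n + 1) = 0 := by
                  rw [List.countP_eq_zero]
                  intro p hp
                  have := hNdeg p hp
                  simp only [beq_iff_eq]
                  omega
                rw [hN0, List.countP_cons_of_pos (p := fun p => p.natDegree == n + 1) (a := e) (by simpa using hedeg), hcM]
                omega
            by_cases h₁1 : (g - f) * Polynomial.C (g - f).leadingCoeff⁻¹ = 1
            · have hsw : mwK.sym (Polynomial.aeval x (g - f))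
                  = res (mwE.sym (g - f).leadingCoeff) := by
                rw [hfac, h₁1, map_one, mul_one, res_sym _ hlc]
              rw [hsw, ← mwK.eta_pow_shift]
              refine g0_res x d mwK res _ ?_
              have h9 := hHyp k [] (by simp)
              rw [wP_nil, one_mul] at h9
              exact h9
            · have h₁0 : ((g - f) * Polynomial.C (g - f).leadingCoeff⁻¹) ≠ 0 := hmon.ne_zero
              have hcK : algebraMap E K (g - f).leadingCoeff ≠ 0 :=
                (map_ne_zero_iff _ (algebraMap E K).injective).mpr hlc
              have hval₁ : Polynomial.aeval x ((g - f) * Polynomial.C (g - f).leadingCoeff⁻¹) ≠ 0 :=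
                aeval_ne x d hadj hdeg _ h₁0 (by omega)
              have hsymw : mwK.sym (Polynomial.aeval x (g - f))
                  = res (mwE.sym (g - f).leadingCoeff)
                    + res (1 + mwE.eta * mwE.sym (g - f).leadingCoeff)
                      * mwK.sym (Polynomial.aeval x ((g - f) * Polynomial.C (g - f).leadingCoeff⁻¹)) := by
                have hr2 : res (1 + mwE.eta * mwE.sym (g - f).leadingCoeff)
                    = 1 + mwK.eta * mwK.sym (algebraMap E K (g - f).leadingCoeff) := by
                  rw [map_add, map_one, map_mul, res_eta, res_sym _ hlc]
                rw [hfac, mwK.sym_mul _ _ hcK hval₁, hr2, res_sym _ hlc]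
                noncomm_ring
              rw [hsymw]
              have esplit : mwK.eta ^ k * ((res (mwE.sym (g - f).leadingCoeff)
                    + res (1 + mwE.eta * mwE.sym (g - f).leadingCoeff)
                      * mwK.sym (Polynomial.aeval x ((g - f) * Polynomial.C (g - f).leadingCoeff⁻¹)))
                    * (wP x mwK (e :: (F2 ++ Rr)) * wP x mwK τ))
                  = res (mwE.sym (g - f).leadingCoeff)
                      * (mwK.eta ^ k * (wP x mwK (e :: (F2 ++ Rr)) * wP x mwK τ))
                    + res (1 + mwE.eta * mwE.sym (g - f).leadingCoeff)
                      * (mwK.eta ^ k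
                        * (mwK.sym (Polynomial.aeval x ((g - f) * Polynomial.C (g - f).leadingCoeff⁻¹))
                          * (wP x mwK (e :: (F2 ++ Rr)) * wP x mwK τ))) := by
                have s1 : mwK.eta ^ k * (res (mwE.sym (g - f).leadingCoeff)
                      * (wP x mwK (e :: (F2 ++ Rr)) * wP x mwK τ))
                    = res (mwE.sym (g - f).leadingCoeff)
                      * (mwK.eta ^ k * (wP x mwK (e :: (F2 ++ Rr)) * wP x mwK τ)) :=
                  (mwK.eta_pow_shift k _ _).symm
                have s2 : mwK.eta ^ k * ((res (1 + mwE.eta * mwE.sym (g - f).leadingCoeff)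
                      * mwK.sym (Polynomial.aeval x ((g - f) * Polynomial.C (g - f).leadingCoeff⁻¹)))
                      * (wP x mwK (e :: (F2 ++ Rr)) * wP x mwK τ))
                    = res (1 + mwE.eta * mwE.sym (g - f).leadingCoeff)
                      * (mwK.eta ^ k
                        * (mwK.sym (Polynomial.aeval x ((g - f) * Polynomial.C (g - f).leadingCoeff⁻¹))
                          * (wP x mwK (e :: (F2 ++ Rr)) * wP x mwK τ))) := by
                  rw [mul_assoc]
                  exact (mwK.eta_pow_shift k _ _).symm
                rw [add_mul, mul_add, s1, s2]
              rw [esplit]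
              refine add_mem ?_ ?_
              · refine g0_res x d mwK res _ ?_
                have h9 := hHyp k [] (by simp)
                rw [wP_nil, one_mul] at h9
                exact h9
              · refine g0_res x d mwK res _ ?_
                exact exp_lemma x d hadj hdeg mwK mwE res res_sym res_eta hw0 hw1
                  ((g - f) * Polynomial.C (g - f).leadingCoeff⁻¹).natDegree
                  ((g - f) * Polynomial.C (g - f).leadingCoeff⁻¹) le_rfl hmon (by omega)
                  (wP x mwK (e :: (F2 ++ Rr)) * wP x mwK τ) hHyp k
          refine add_mem (sub_mem (main_term f hfmem.1 hfmem.2) (main_term g hgmem.1 hgmem.2)) ?_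
          -- the third term
          have e3 : mwK.eta ^ k * ((mwK.eps * (mwK.sym (-1) * mwK.sym (Polynomial.aeval x g)))
                * (wP x mwK (F2 ++ Rr) * wP x mwK τ))
              = mwK.eps * (mwK.sym (-1)
                * (mwK.eta ^ k * (wP x mwK (g :: (F2 ++ Rr)) * wP x mwK τ))) := by
            rw [wP_cons]
            rw [show (mwK.eps * (mwK.sym (-1) * mwK.sym (Polynomial.aeval x g)))
                  * (wP x mwK (F2 ++ Rr) * wP x mwK τ)
                = mwK.eps * (mwK.sym (-1) * ((mwK.sym (Polynomial.aeval x g)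
                  * wP x mwK (F2 ++ Rr)) * wP x mwK τ)) from by noncomm_ring]
            rw [mwK.eps_shift]
            congr 1
            rw [← mwK.eta_pow_shift]
          rw [e3]
          refine g0_eps x d mwK mwE res res_sym res_eta ?_
          refine g0_sneg1 x d mwK mwE res res_sym ?_
          refine ihc (g :: (F2 ++ Rr)) τ k ?_ ?_ hτ
          · intro p hp
            rcases List.mem_cons.mp hp with h | h
            · rw [h]; exact ⟨(hL g hgmem.1).1, by omega⟩
            · exact hMgood p h
          · rw [List.countP_cons_of_pos (p := fun p => p.natDegree == n + 1) (a := g) (by simpa using hgmem.2), hcM]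

end Ctx4

end BTMain
namespace BTMain

open Polynomial

section Ctx5

variable {E K : Type} [Field E] [Field K] [Algebra E K] {AE AK : Type} [Ring AE] [Ring AK]
variable (x : K) (d : ℕ)
variable [FiniteDimensional E K]
variable (hadj : IntermediateField.adjoin E {x} = ⊤) (hdeg : Module.finrank E K = d)
variable (mwK : MWKData K AK) (mwE : MWKData E AE) (res : AE →+* AK)
variable (res_sym : ∀ a : E, a ≠ 0 → res (mwE.sym a) = mwK.sym (algebraMap E K a))
variable (res_eta : res mwE.eta = mwK.eta)

include hadj hdeg res_sym res_eta in
lemma master (z : K) (hz : z ≠ 0) :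
    ∀ y ∈ Gg E x d mwK res, y * mwK.sym z ∈ Gg E x d mwK res := by
  intro y hy
  have hy' : y ∈ AddSubgroup.closure (Sgen E x d mwK res) := hy
  clear hy
  induction hy' using AddSubgroup.closure_induction with
  | zero => rw [zero_mul]; exact zero_mem _
  | add a b ha hb iha ihb => rw [add_mul]; exact add_mem iha ihb
  | neg a ha iha => rw [neg_mul]; exact neg_mem iha
  | mem s hs =>
    obtain ⟨a, m, nn, q, h1, h2, h3, rfl⟩ := hs
    have hword : (List.ofFn fun i => mwK.sym (Polynomial.aeval x (q i))).prod
        = wP x mwK (List.ofFn q) := by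
      unfold wP
      rw [List.map_ofFn]
      rfl
    have hτgood : ∀ p ∈ List.ofFn q, Good E d p := by
      intro p hp
      rw [List.mem_ofFn] at hp
      obtain ⟨i, rfl⟩ := hp
      exact ⟨(h1 i).1, (h1 i).2, h3 i⟩
    have hτpw : (List.ofFn q).Pairwise (fun p q' => p.natDegree < q'.natDegree) := by
      rw [List.pairwise_ofFn]
      intro i j hij
      exact h2 i j hij
    have hτvals : ∀ p ∈ List.ofFn q, Polynomial.aeval x p ≠ 0 :=
      fun p hp => good_val x d hadj hdeg (hτgood p hp)
    rw [hword]
    have hpull : ∀ b : AE, ∃ b', wP x mwK (List.ofFn q) * res b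
        = res b' * wP x mwK (List.ofFn q) := by
      intro b
      by_cases hτnil : List.ofFn q = ([] : List (Polynomial E))
      · exact ⟨b, by rw [hτnil, wP_nil, one_mul, mul_one]⟩
      · obtain ⟨p, hp⟩ := List.exists_mem_of_ne_nil _ hτnil
        have hgp := hτgood p hp
        have hd2 : 2 ≤ d := by
          have h1p := irr_deg_pos hgp.1 hgp.2.1
          have h2p := hgp.2.2
          have := dpos d hdeg
          omega
        obtain ⟨hx0, hx1⟩ := xne x d hadj hdeg hd2
        exact rpull x mwK mwE res res_sym res_eta hx0 hx1 _ hτvals b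
    have hconstmul : ∀ b : AE, res a * (mwK.eta ^ m * wP x mwK (List.ofFn q)) * res b
        ∈ Gg E x d mwK res := by
      intro b
      obtain ⟨b', hb'⟩ := hpull b
      have hcalc : res a * (mwK.eta ^ m * wP x mwK (List.ofFn q)) * res b
          = res (a * b') * (mwK.eta ^ m * wP x mwK (List.ofFn q)) := by
        calc res a * (mwK.eta ^ m * wP x mwK (List.ofFn q)) * res b
            = res a * (mwK.eta ^ m * (wP x mwK (List.ofFn q) * res b)) := by noncomm_ring
          _ = res a * (mwK.eta ^ m * (res b' * wP x mwK (List.ofFn q))) := by rw [hb']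
          _ = res a * (res b' * (mwK.eta ^ m * wP x mwK (List.ofFn q))) := by
              rw [← mwK.eta_pow_shift]
          _ = res (a * b') * (mwK.eta ^ m * wP x mwK (List.ofFn q)) := by
              rw [map_mul, mul_assoc]
      rw [hcalc]
      exact AddSubgroup.subset_closure (memS x d mwK res (a * b') m _ hτgood hτpw)
    obtain ⟨cz, fz, hc0, hfm, hfd, hzeq⟩ := canon x d hadj hdeg z hz
    by_cases hf1 : fz = 1
    · have hzc : mwK.sym z = res (mwE.sym cz) := by
        rw [hzeq, hf1, map_one, mul_one, res_sym _ hc0]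
      rw [hzc]
      exact hconstmul _
    · have hfd0 : fz.natDegree ≠ 0 := fun h => hf1 (hfm.natDegree_eq_zero.mp h)
      have hdd := dpos d hdeg
      have hd2 : 2 ≤ d := by omega
      obtain ⟨hx0, hx1⟩ := xne x d hadj hdeg hd2
      have hcK : algebraMap E K cz ≠ 0 :=
        (map_ne_zero_iff _ (algebraMap E K).injective).mpr hc0
      have hfv : Polynomial.aeval x fz ≠ 0 := aeval_ne x d hadj hdeg fz hfm.ne_zero (by omega)
      have hsymz : mwK.sym z = res (mwE.sym cz)
          + res (1 + mwE.eta * mwE.sym cz) * mwK.sym (Polynomial.aeval x fz) := by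
        have hr2 : res (1 + mwE.eta * mwE.sym cz)
            = 1 + mwK.eta * mwK.sym (algebraMap E K cz) := by
          rw [map_add, map_one, map_mul, res_eta, res_sym _ hc0]
        rw [hzeq, mwK.sym_mul _ _ hcK hfv, hr2, res_sym _ hc0]
        noncomm_ring
      rw [hsymz, mul_add]
      refine add_mem (hconstmul _) ?_
      obtain ⟨b₂, hb₂⟩ := hpull (1 + mwE.eta * mwE.sym cz)
      have hG0 : mwK.eta ^ m * (mwK.sym (Polynomial.aeval x fz) * wP x mwK (List.ofFn q))
          ∈ G0 E x d mwK res := by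
        refine exp_lemma x d hadj hdeg mwK mwE res res_sym res_eta hx0 hx1 fz.natDegree fz
          le_rfl hfm (by omega) (wP x mwK (List.ofFn q)) ?_ m
        intro k' N hN
        have hL' : ∀ p ∈ N ++ List.ofFn q, Good E d p ∧ p.natDegree ≤ d - 1 := by
          intro p hp
          rcases List.mem_append.mp hp with h | h
          · have hdN := Polynomial.natDegree_le_of_dvd (hN p h).2.2 hfm.ne_zero
            exact ⟨⟨(hN p h).1, (hN p h).2.1, by omega⟩, by omega⟩
          · exact ⟨hτgood p h, (hτgood p h).2.2⟩
        have htg : TailGood E d (d - 1) [] := ⟨by simp, by simp⟩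
        have hmem := psi x d hadj hdeg mwK mwE res res_sym res_eta hx0 hx1 (d - 1)
          (N ++ List.ofFn q) [] k' hL' htg
        rw [wP_nil, mul_one, wP_append] at hmem
        exact hmem
      have hjv : ∀ p ∈ List.ofFn q ++ [fz], Polynomial.aeval x p ≠ 0 := by
        intro p hp
        rcases List.mem_append.mp hp with h | h
        · exact hτvals p h
        · rw [List.mem_singleton] at h; rw [h]; exact hfv
      obtain ⟨j, hj⟩ := perm_eps x mwK hx0 hx1 (List.perm_append_singleton fz (List.ofFn q)) hjv
      have hcalc2 : res a * (mwK.eta ^ m * wP x mwK (List.ofFn q))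
            * (res (1 + mwE.eta * mwE.sym cz) * mwK.sym (Polynomial.aeval x fz))
          = res (a * b₂ * mwE.eps ^ j)
            * (mwK.eta ^ m * (mwK.sym (Polynomial.aeval x fz) * wP x mwK (List.ofFn q))) := by
        calc res a * (mwK.eta ^ m * wP x mwK (List.ofFn q))
              * (res (1 + mwE.eta * mwE.sym cz) * mwK.sym (Polynomial.aeval x fz))
            = res a * (mwK.eta ^ m * ((wP x mwK (List.ofFn q) * res (1 + mwE.eta * mwE.sym cz))
                * mwK.sym (Polynomial.aeval x fz))) := by noncomm_ring
          _ = res a * (mwK.eta ^ m * ((res b₂ * wP x mwK (List.ofFn q))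
                * mwK.sym (Polynomial.aeval x fz))) := by rw [hb₂]
          _ = res a * (res b₂ * (mwK.eta ^ m * (wP x mwK (List.ofFn q)
                * mwK.sym (Polynomial.aeval x fz)))) := by
              rw [mul_assoc (res b₂), ← mwK.eta_pow_shift]
          _ = res (a * b₂) * (mwK.eta ^ m * (wP x mwK (List.ofFn q)
                * mwK.sym (Polynomial.aeval x fz))) := by rw [map_mul, mul_assoc]
          _ = res (a * b₂) * (mwK.eta ^ m * (mwK.eps ^ j
                * (mwK.sym (Polynomial.aeval x fz) * wP x mwK (List.ofFn q)))) := by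
              rw [show wP x mwK (List.ofFn q) * mwK.sym (Polynomial.aeval x fz)
                  = wP x mwK (List.ofFn q ++ [fz]) from by rw [wP_append, wP_singleton], hj,
                wP_cons]
          _ = res (a * b₂) * (res (mwE.eps ^ j) * (mwK.eta ^ m
                * (mwK.sym (Polynomial.aeval x fz) * wP x mwK (List.ofFn q)))) := by
              rw [mwK.eps_pow_shift, res_eps_pow mwK mwE res res_sym res_eta]
          _ = res (a * b₂ * mwE.eps ^ j) * (mwK.eta ^ m
                * (mwK.sym (Polynomial.aeval x fz) * wP x mwK (List.ofFn q))) := by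
              conv_rhs => rw [map_mul, mul_assoc]
      rw [hcalc2]
      exact hG0 (a * b₂ * mwE.eps ^ j)

include hadj hdeg res_sym res_eta in
theorem main : AddSubgroup.closure (Sgen E x d mwK res) = ⊤ := by
  rw [AddSubgroup.eq_top_iff']
  intro y
  have hstep : ∀ w : AK, ∀ g ∈ Gg E x d mwK res, g * w ∈ Gg E x d mwK res := by
    intro w
    have hw : w ∈ Subring.closure (mwK.sym '' {u : K | u ≠ 0} ∪ {mwK.eta}) := by
      rw [mwK.generates]; trivial
    induction hw using Subring.closure_induction with
    | mem u hu =>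
      rcases hu with ⟨z, hz, rfl⟩ | hu
      · exact master x d hadj hdeg mwK mwE res res_sym res_eta z hz
      · rw [Set.mem_singleton_iff] at hu; subst hu
        intro g hg
        rw [(mwK.eta_central g).symm]
        exact etaGg x d mwK mwE res res_eta hg
    | zero => intro g hg; rw [mul_zero]; exact zero_mem _
    | one => intro g hg; rw [mul_one]; exact hg
    | add a b ha hb iha ihb => intro g hg; rw [mul_add]; exact add_mem (iha g hg) (ihb g hg)
    | neg a ha iha => intro g hg; rw [mul_neg]; exact neg_mem (iha g hg)
    | mul a b ha hb iha ihb => intro g hg; rw [← mul_assoc]; exact ihb _ (iha g hg)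
  have h1 := hstep y 1 (one_mem_Gg x d mwK res)
  rwa [one_mul] at h1

end Ctx5

end BTMain


/-- Bass–Tate–Morel lemma: for a simple finite extension `K = E(x)` of degree `d`,
Milnor–Witt K-theory `K^MW(K)` is generated as a left `K^MW(E)`-module by the elements
`η^m · [p₁(x)] ⋯ [p_n(x)]` where the `pᵢ` are monic irreducible polynomials over `E`
of strictly increasing degrees `≤ d - 1`. -/
theorem bass_tate_morel
    (E K : Type) [Field E] [Field K] [Algebra E K] (x : K)
    (hadj : IntermediateField.adjoin E {x} = ⊤)
    (d : ℕ) [FiniteDimensional E K] (hdeg : Module.finrank E K = d)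
    (AE AK : Type) [Ring AE] [Ring AK]
    (mwE : MWKData E AE) (mwK : MWKData K AK)
    (res : AE →+* AK)
    (res_sym : ∀ a : E, a ≠ 0 → res (mwE.sym a) = mwK.sym (algebraMap E K a))
    (res_eta : res mwE.eta = mwK.eta) :
    AddSubgroup.closure {z : AK | ∃ (a : AE) (m nn : ℕ) (q : Fin nn → Polynomial E),
      (∀ i, (q i).Monic ∧ Irreducible (q i)) ∧
      (∀ i j : Fin nn, i < j → (q i).natDegree < (q j).natDegree) ∧
      (∀ i, (q i).natDegree ≤ d - 1) ∧
      z = res a * (mwK.eta ^ m *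
        (List.ofFn fun i => mwK.sym (Polynomial.aeval x (q i))).prod)} = ⊤ := by
  exact BTMain.main x d hadj hdeg mwK mwE res res_sym res_eta
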